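/- arXiv:1704.07112 — 4 statements merged into one kernel-verified Lean document; each statement's English description precedes it below -/
import Mathlib

section
/- If D = (d_1,...,d_n) and F = (f_1,...,f_n) are tree degree sequences with d_i + f_i ≥ 3 for all i, then the sequence D + F = (d_1+f_1,...,d_n+f_n) is graphical. -/
/-- `G` realizes the degree sequence `d`: vertex `v` has degree `d v`. -/
def realizes {n : ℕ} (G : SimpleGraph (Fin n)) (d : Fin n → ℕ) : Prop :=
  ∀ v, {u | G.Adj v u}.ncard = d v

/-- A tree degree sequence: positive entries summing to `2n - 2`. -/
def isTreeSeq {n : ℕ} (d : Fin n → ℕ) : Prop :=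
  (∀ i, 1 ≤ d i) ∧ (∑ i, d i) = 2 * n - 2

/-- A caterpillar: a tree whose non-leaf vertices span a path. -/
def isCaterpillar {n : ℕ} (T : SimpleGraph (Fin n)) : Prop :=
  T.IsTree ∧ ∃ p : List (Fin n), p.Nodup ∧ p.Chain' T.Adj ∧
    ∀ v, (1 < {u | T.Adj v u}.ncard ↔ v ∈ p)


lemma exists_sum_between_fin {α : Type*} [DecidableEq α] (lb ub : α → ℕ) (s : Finset α) (targ : ℕ)
    (hle : ∀ x ∈ s, lb x ≤ ub x) (h1 : ∑ x ∈ s, lb x ≤ targ) (h2 : targ ≤ ∑ x ∈ s, ub x) :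
    ∃ δ : α → ℕ, (∀ x ∈ s, lb x ≤ δ x ∧ δ x ≤ ub x) ∧ ∑ x ∈ s, δ x = targ := by
  induction s using Finset.cons_induction generalizing targ with
  | empty => simp_all
  | cons a t ha ih =>
    rw [Finset.sum_cons] at h1 h2
    have hba : lb a ≤ ub a := hle a (Finset.mem_cons_self a t)
    have hsum : ∑ x ∈ t, lb x ≤ ∑ x ∈ t, ub x :=
      Finset.sum_le_sum (fun x hx => hle x (Finset.mem_cons_of_mem hx))
    obtain ⟨d, hd1, hd2, hd3, hd4, hd5⟩ :
        ∃ d, lb a ≤ d ∧ d ≤ ub a ∧ ∑ x ∈ t, lb x ≤ targ - d ∧ targ - d ≤ ∑ x ∈ t, ub x ∧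
          d ≤ targ :=
      by
        by_cases hA : targ ≤ (∑ x ∈ t, ub x) + lb a
        · exact ⟨lb a, by omega⟩
        by_cases hB : targ ≤ (∑ x ∈ t, ub x) + ub a
        · exact ⟨targ - ∑ x ∈ t, ub x, by omega⟩
        · exact ⟨ub a, by omega⟩
    obtain ⟨δ, hδ1, hδ2⟩ := ih (fun x hx => hle x (Finset.mem_cons_of_mem hx)) (targ := targ - d)
      hd3 hd4
    refine ⟨fun x => if x = a then d else δ x, fun y hy => ?_, ?_⟩
    · dsimp only
      rcases Finset.mem_cons.mp hy with rfl | hy'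
      · rw [if_pos rfl]; omega
      · have hne : y ≠ a := by rintro rfl; exact ha hy'
        rw [if_neg hne]; exact hδ1 y hy'
    · rw [Finset.sum_cons, if_pos rfl, Finset.sum_congr rfl
        (fun y hy => if_neg (by rintro rfl; exact ha hy)), hδ2]
      omega

lemma exists_sum_between {m : ℕ} (lb ub : Fin m → ℕ) (s : ℕ)
    (hle : ∀ x, lb x ≤ ub x) (h1 : ∑ x, lb x ≤ s) (h2 : s ≤ ∑ x, ub x) :
    ∃ δ : Fin m → ℕ, (∀ x, lb x ≤ δ x ∧ δ x ≤ ub x) ∧ ∑ x, δ x = s := by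
  obtain ⟨δ, h1, h2⟩ := exists_sum_between_fin lb ub Finset.univ s (fun x _ => hle x) h1 h2
  exact ⟨δ, fun x => h1 x (Finset.mem_univ x), h2⟩

lemma exists_fiber_fun {m k : ℕ} (δ : Fin m → ℕ) (h : ∑ x, δ x = k) :
    ∃ f : Fin k → Fin m, ∀ x, (Finset.univ.filter (fun j => f j = x)).card = δ x := by
  have hc : Fintype.card (Σ x : Fin m, Fin (δ x)) = k := by simp [h]
  let e : (Σ x : Fin m, Fin (δ x)) ≃ Fin k := Fintype.equivFinOfCardEq hc
  refine ⟨fun j => (e.symm j).1, fun x => ?_⟩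
  have h1 : (Finset.univ.filter (fun j : Fin k => (e.symm j).1 = x)).card
      = (Finset.univ.filter (fun s : Σ x' : Fin m, Fin (δ x') => s.1 = x)).card := by
    apply Finset.card_equiv e.symm
    intro j
    simp
  rw [h1]
  have h2 : (Finset.univ.filter (fun s : Σ x' : Fin m, Fin (δ x') => s.1 = x))
      = ({x} : Finset (Fin m)).sigma (fun _ => Finset.univ) := by
    ext ⟨a, b⟩
    simp [eq_comm]
  rw [h2, Finset.card_sigma]
  simp


def realizes' {V : Type*} (G : SimpleGraph V) (c : V → ℕ) : Prop :=
  ∀ v, {u | G.Adj v u}.ncard = c v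

def Q (n : ℕ) : Prop := ∀ c : Fin n → ℕ, (∀ i, 3 ≤ c i) → (∀ i, c i + 1 ≤ n) →
    (∑ i, c i) + 4 = 4 * n → ∃ G : SimpleGraph (Fin n), realizes' G c

lemma ncard_nbr {V : Type*} [Fintype V] (G : SimpleGraph V) [DecidableRel G.Adj] (v : V) :
    {u | G.Adj v u}.ncard = G.degree v := by
  rw [show {u | G.Adj v u} = G.neighborSet v from rfl]
  rw [Set.ncard_eq_toFinset_card', ← SimpleGraph.card_neighborSet_eq_degree]
  simp [Set.toFinset_card]

lemma realizes'_iff_degree {V : Type*} [Fintype V] (G : SimpleGraph V) [DecidableRel G.Adj]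
    (c : V → ℕ) : realizes' G c ↔ ∀ v, G.degree v = c v := by
  unfold realizes'
  simp_rw [ncard_nbr]

lemma exists_realizes_of_equiv {V W : Type*} (e : V ≃ W) (c : W → ℕ)
    (h : ∃ G : SimpleGraph V, realizes' G (c ∘ e)) : ∃ H : SimpleGraph W, realizes' H c := by
  obtain ⟨G, hG⟩ := h
  refine ⟨⟨fun a b => G.Adj (e.symm a) (e.symm b), ⟨fun a b h => G.adj_symm h⟩, ⟨fun a h => G.irrefl h⟩⟩,
    fun w => ?_⟩
  have : {u | G.Adj (e.symm w) (e.symm u)} = e '' {u | G.Adj (e.symm w) u} := by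
    ext u
    simp only [Set.mem_setOf_eq, Set.mem_image]
    constructor
    · intro h; exact ⟨e.symm u, h, by simp⟩
    · rintro ⟨x, hx, rfl⟩; simpa using hx
  show {u | G.Adj (e.symm w) (e.symm u)}.ncard = c w
  rw [this, Set.ncard_image_of_injective _ e.injective]
  simpa using hG (e.symm w)

def listGraph (n : ℕ) (L : List (ℕ × ℕ)) : SimpleGraph (Fin n) where
  Adj i j := i ≠ j ∧ ((i.val, j.val) ∈ L ∨ (j.val, i.val) ∈ L)
  symm := ⟨fun a b h => ⟨Ne.symm h.1, h.2.symm⟩⟩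
  loopless := ⟨fun a h => h.1 rfl⟩

instance (n : ℕ) (L : List (ℕ × ℕ)) : DecidableRel (listGraph n L).Adj := fun a b =>
  decidable_of_iff (a ≠ b ∧ ((a.val, b.val) ∈ L ∨ (b.val, a.val) ∈ L)) Iff.rfl

/-- two distinct entries give a sum lower bound -/
lemma split2 {n : ℕ} (c : Fin n → ℕ) (hk : ∀ i, 3 ≤ c i) (a b : Fin n) (hab : a ≠ b) :
    c a + c b + 3 * (n - 2) ≤ ∑ i, c i := by
  classical
  have h1 : ∑ i, c i = c a + ∑ i ∈ Finset.univ.erase a, c i :=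
    (Finset.add_sum_erase _ _ (Finset.mem_univ a)).symm
  have hbmem : b ∈ Finset.univ.erase a := Finset.mem_erase.mpr ⟨hab.symm, Finset.mem_univ b⟩
  have h2 : ∑ i ∈ Finset.univ.erase a, c i
      = c b + ∑ i ∈ (Finset.univ.erase a).erase b, c i :=
    (Finset.add_sum_erase _ _ hbmem).symm
  have h3 : ((Finset.univ.erase a).erase b).card * 3
      ≤ ∑ i ∈ (Finset.univ.erase a).erase b, c i := by
    simpa [smul_eq_mul] using Finset.card_nsmul_le_sum _ c 3 (fun i _ => hk i)
  have h4 : ((Finset.univ.erase a).erase b).card = n - 2 := by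
    rw [Finset.card_erase_of_mem hbmem, Finset.card_erase_of_mem (Finset.mem_univ a)]
    simp
    omega
  omega

lemma split3 {n : ℕ} (c : Fin n → ℕ) (hk : ∀ i, 3 ≤ c i) (a b d : Fin n) (hab : a ≠ b)
    (had : a ≠ d) (hbd : b ≠ d) :
    c a + c b + c d + 3 * (n - 3) ≤ ∑ i, c i := by
  classical
  have h1 : ∑ i, c i = c a + ∑ i ∈ Finset.univ.erase a, c i :=
    (Finset.add_sum_erase _ _ (Finset.mem_univ a)).symm
  have hbmem : b ∈ Finset.univ.erase a := Finset.mem_erase.mpr ⟨hab.symm, Finset.mem_univ b⟩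
  have h2 : ∑ i ∈ Finset.univ.erase a, c i
      = c b + ∑ i ∈ (Finset.univ.erase a).erase b, c i :=
    (Finset.add_sum_erase _ _ hbmem).symm
  have hdmem : d ∈ (Finset.univ.erase a).erase b :=
    Finset.mem_erase.mpr ⟨hbd.symm, Finset.mem_erase.mpr ⟨had.symm, Finset.mem_univ d⟩⟩
  have h2' : ∑ i ∈ (Finset.univ.erase a).erase b, c i
      = c d + ∑ i ∈ ((Finset.univ.erase a).erase b).erase d, c i :=
    (Finset.add_sum_erase _ _ hdmem).symm
  have h3 : (((Finset.univ.erase a).erase b).erase d).card * 3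
      ≤ ∑ i ∈ ((Finset.univ.erase a).erase b).erase d, c i := by
    simpa [smul_eq_mul] using Finset.card_nsmul_le_sum _ c 3 (fun i _ => hk i)
  have h4 : (((Finset.univ.erase a).erase b).erase d).card = n - 3 := by
    rw [Finset.card_erase_of_mem hdmem, Finset.card_erase_of_mem hbmem,
      Finset.card_erase_of_mem (Finset.mem_univ a)]
    simp
    omega
  omega

lemma all3_of_not_exists {n : ℕ} (c : Fin n → ℕ) (hk : ∀ i, 3 ≤ c i)
    (h : ¬ ∃ a, 4 ≤ c a) : ∀ i, c i = 3 := by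
  push_neg at h
  intro i
  have := hk i
  have := h i
  omega

lemma base4 : Q 4 := by
  intro c h3 hub hsum
  refine ⟨⊤, ?_⟩
  rw [realizes'_iff_degree]
  intro v
  have h1 : (⊤ : SimpleGraph (Fin 4)).degree v = 3 := by
    simp [SimpleGraph.complete_graph_degree]
  have h2 := h3 v
  have h4 := hub v
  omega

lemma base5 : Q 5 := by
  classical
  intro c h3 hub hsum
  -- there is an entry equal to 4
  have hex : ∃ a, 4 ≤ c a := by
    by_contra h
    have hall := all3_of_not_exists c h3 h
    have : ∑ i, c i = ∑ _i : Fin 5, 3 := Finset.sum_congr rfl (fun i _ => hall i)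
    simp at this
    omega
  obtain ⟨a, ha4⟩ := hex
  have ha : c a = 4 := by have := hub a; omega
  have hkey : ∀ i, i ≠ a → c i = 3 := by
    intro i hia
    by_contra h
    have h4 : c i = 4 := by have := h3 i; have := hub i; omega
    have := split2 c h3 a i (Ne.symm hia)
    omega
  -- relabel so that the 4 sits at position 4
  apply exists_realizes_of_equiv (Equiv.swap a 4) c
  have hd : c ∘ (Equiv.swap a 4) = ![3, 3, 3, 3, 4] := by
    funext i
    by_cases hi : i = (4 : Fin 5)
    · subst hi
      simp [Equiv.swap_apply_right, ha]
    · have h1 : Equiv.swap a 4 i ≠ a := by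
        intro h
        apply hi
        have := (Equiv.swap a 4).injective (h.trans (Equiv.swap_apply_right a 4).symm)
        exact this
      have h2 : c (Equiv.swap a 4 i) = 3 := hkey _ h1
      show c (Equiv.swap a 4 i) = _
      rw [h2]
      fin_cases i <;> simp_all
  rw [hd]
  refine ⟨listGraph 5 [(0,1),(1,2),(2,3),(3,0),(4,0),(4,1),(4,2),(4,3)], ?_⟩
  rw [realizes'_iff_degree]
  decide

lemma base6 : Q 6 := by
  classical
  intro c h3 hub hsum
  by_cases hbig : ∃ a, c a = 5
  · obtain ⟨a, ha⟩ := hbig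
    have hkey : ∀ i, i ≠ a → c i = 3 := by
      intro i hia
      by_contra h
      have h4 : 4 ≤ c i := by have := h3 i; omega
      have := split2 c h3 a i (Ne.symm hia)
      omega
    apply exists_realizes_of_equiv (Equiv.swap a 5) c
    have hd : c ∘ (Equiv.swap a 5) = ![3, 3, 3, 3, 3, 5] := by
      funext i
      by_cases hi : i = (5 : Fin 6)
      · subst hi
        show c (Equiv.swap a 5 5) = _
        rw [Equiv.swap_apply_right, ha]
        decide
      · have h1 : Equiv.swap a 5 i ≠ a := by
          intro h
          apply hi
          exact (Equiv.swap a 5).injective (h.trans (Equiv.swap_apply_right a 5).symm)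
        have h2 : c (Equiv.swap a 5 i) = 3 := hkey _ h1
        show c (Equiv.swap a 5 i) = _
        rw [h2]
        fin_cases i <;> simp_all
    rw [hd]
    refine ⟨listGraph 6 [(5,0),(5,1),(5,2),(5,3),(5,4),(0,1),(1,2),(2,3),(3,4),(4,0)], ?_⟩
    rw [realizes'_iff_degree]
    decide
  · -- all entries at most 4; exactly two entries equal 4
    push_neg at hbig
    have hub4 : ∀ i, c i ≤ 4 := by
      intro i
      have := hub i
      have := hbig i
      omega
    have hex : ∃ a, 4 ≤ c a := by
      by_contra h
      have hall := all3_of_not_exists c h3 h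
      have : ∑ i, c i = ∑ _i : Fin 6, 3 := Finset.sum_congr rfl (fun i _ => hall i)
      simp at this
      omega
    obtain ⟨a, ha4⟩ := hex
    have ha : c a = 4 := by have := hub4 a; omega
    have hexb : ∃ b, b ≠ a ∧ c b = 4 := by
      by_contra h
      push_neg at h
      have hall : ∀ i, i ≠ a → c i = 3 := by
        intro i hia
        have := h i hia
        have := h3 i
        have := hub4 i
        omega
      have h1 : ∑ i, c i = c a + ∑ i ∈ Finset.univ.erase a, c i :=
        (Finset.add_sum_erase _ _ (Finset.mem_univ a)).symm
      have h2 : ∑ i ∈ Finset.univ.erase a, c i = ∑ _i ∈ Finset.univ.erase a, 3 :=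
        Finset.sum_congr rfl (fun i hi => hall i (Finset.mem_erase.mp hi).1)
      have h3' : ∑ _i ∈ Finset.univ.erase a, (3:ℕ) = 15 := by
        rw [Finset.sum_const, Finset.card_erase_of_mem (Finset.mem_univ a)]
        simp
      omega
    obtain ⟨b, hba, hb⟩ := hexb
    have hkey : ∀ i, i ≠ a → i ≠ b → c i = 3 := by
      intro i hia hib
      by_contra h
      have h4 : c i = 4 := by have := h3 i; have := hub4 i; omega
      have := split3 c h3 a b i hba.symm (Ne.symm hia) (Ne.symm hib)
      omega
    -- relabel: b ↦ 5 then a ↦ 4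
    obtain ⟨a1, ha1a, ha1ne5⟩ : ∃ a1 : Fin 6, Equiv.swap b 5 a1 = a ∧ a1 ≠ 5 := by
      refine ⟨Equiv.swap b 5 a, Equiv.swap_apply_self b 5 a, ?_⟩
      intro h
      have h2 := congrArg (Equiv.swap b 5) h
      rw [Equiv.swap_apply_self, Equiv.swap_apply_right] at h2
      exact hba h2.symm
    apply exists_realizes_of_equiv ((Equiv.swap a1 4).trans (Equiv.swap b 5)) c
    have hd : c ∘ ((Equiv.swap a1 4).trans (Equiv.swap b 5)) = ![3, 3, 3, 3, 4, 4] := by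
      funext i
      show c (Equiv.swap b 5 (Equiv.swap a1 4 i)) = _
      by_cases hi4 : i = (4 : Fin 6)
      · subst hi4
        rw [Equiv.swap_apply_right, ha1a, ha]
        decide
      by_cases hi5 : i = (5 : Fin 6)
      · subst hi5
        rw [Equiv.swap_apply_of_ne_of_ne (Ne.symm ha1ne5) (by decide),
          Equiv.swap_apply_right, hb]
        decide
      · have hna : Equiv.swap b 5 (Equiv.swap a1 4 i) ≠ a := by
          intro h
          rw [← ha1a] at h
          have h2 := (Equiv.swap b 5).injective h
          have h3' : Equiv.swap a1 4 i = Equiv.swap a1 4 (4 : Fin 6) := by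
            rw [Equiv.swap_apply_right]
            exact h2
          exact hi4 ((Equiv.swap a1 4).injective h3')
        have hnb : Equiv.swap b 5 (Equiv.swap a1 4 i) ≠ b := by
          intro h
          have h2 := congrArg (Equiv.swap b 5) h
          rw [Equiv.swap_apply_self, Equiv.swap_apply_left] at h2
          have h3' : Equiv.swap a1 4 i = Equiv.swap a1 4 (5 : Fin 6) := by
            rw [Equiv.swap_apply_of_ne_of_ne (Ne.symm ha1ne5) (by decide)]
            exact h2
          exact hi5 ((Equiv.swap a1 4).injective h3')
        rw [hkey _ hna hnb]
        fin_cases i <;> simp_all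
    rw [hd]
    refine ⟨listGraph 6 [(0,3),(0,4),(0,5),(1,2),(1,4),(1,5),(2,4),(2,5),(3,4),(3,5)], ?_⟩
    rw [realizes'_iff_degree]
    decide

lemma step {m : ℕ} (hm : 4 ≤ m) (hQ : Q m) : Q (m + 3) := by
  classical
  intro c h3 hub hsum
  -- at least three indices with value 3
  set S : Finset (Fin (m + 3)) := Finset.univ.filter (fun i => c i = 3) with hS
  have hScard : 3 ≤ S.card := by
    have hpt : ∀ i : Fin (m + 3), 4 ≤ c i + (if i ∈ S then 1 else 0) := by
      intro i
      by_cases h : i ∈ S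
      · have h2 : c i = 3 := (Finset.mem_filter.mp h).2
        rw [if_pos h]; omega
      · have h2 : c i ≠ 3 := fun hc => h (Finset.mem_filter.mpr ⟨Finset.mem_univ i, hc⟩)
        have := h3 i
        rw [if_neg h]; omega
    have hsum2 : ∑ i, (c i + (if i ∈ S then 1 else 0)) = ∑ i, c i + S.card := by
      rw [Finset.sum_add_distrib]
      congr 1
      simp [Finset.sum_ite_mem]
    have hge : 4 * (m + 3) ≤ ∑ i, (c i + (if i ∈ S then 1 else 0)) := by
      calc 4 * (m + 3) = ∑ _i : Fin (m + 3), 4 := by simp [mul_comm]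
      _ ≤ _ := Finset.sum_le_sum (fun i _ => hpt i)
    omega
  obtain ⟨u, v, w, hu, hv, hw, huv, huw, hvw⟩ := Finset.two_lt_card_iff.mp ((by omega : 2 < S.card))
  have hcu : c u = 3 := (Finset.mem_filter.mp hu).2
  have hcv : c v = 3 := (Finset.mem_filter.mp hv).2
  have hcw : c w = 3 := (Finset.mem_filter.mp hw).2
  -- the injection g : Fin 3 → Fin (m+3)
  set g : Fin 3 → Fin (m + 3) := fun j => if j.val = 0 then u else if j.val = 1 then v else w
    with hg
  have hginj : Function.Injective g := by
    intro a b hab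
    fin_cases a <;> fin_cases b <;> simp_all [hg] <;>
      first | rfl | (exact absurd hab huv) | (exact absurd hab huw) | (exact absurd hab hvw) |
        (exact absurd hab.symm huv) | (exact absurd hab.symm huw) | (exact absurd hab.symm hvw)
  -- the equivalence
  have hcard1 : Fintype.card {x : Fin (m + 3) // x ∈ Set.range g} = 3 := by
    rw [Fintype.card_congr (Equiv.ofInjective g hginj).symm]
    simp
  have hcard2 : Fintype.card {x : Fin (m + 3) // x ∉ Set.range g} = m := by
    rw [Fintype.card_subtype_compl, hcard1]
    simp
  let e1 : Fin m ≃ {x : Fin (m + 3) // x ∉ Set.range g} :=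
    (Fintype.equivFinOfCardEq hcard2).symm
  let e : Fin m ⊕ Fin 3 ≃ Fin (m + 3) :=
    (Equiv.sumCongr e1 (Equiv.ofInjective g hginj)).trans ((Equiv.sumComm _ _).trans
      (Equiv.sumCompl (fun x => x ∈ Set.range g)))
  have he_inr : ∀ j, e (Sum.inr j) = g j := by
    intro j
    simp [e, e1]
  set cV : Fin m ⊕ Fin 3 → ℕ := fun x => c (e x) with hcV
  have hcV3 : ∀ j, cV (Sum.inr j) = 3 := by
    intro j
    show c (e (Sum.inr j)) = 3
    rw [he_inr]
    fin_cases j <;> simp [hg, hcu, hcv, hcw]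
  -- total over the inl part
  have hsumV : ∑ x : Fin m ⊕ Fin 3, cV x = 4 * (m + 3) - 4 := by
    rw [hcV]
    rw [Equiv.sum_comp e c]
    omega
  have hsuml : (∑ x : Fin m, cV (Sum.inl x)) + 9 = 4 * m + 8 := by
    have := Fintype.sum_sum_type cV
    have h9 : ∑ j : Fin 3, cV (Sum.inr j) = 9 := by
      rw [Fin.sum_univ_three, hcV3, hcV3, hcV3]
    omega
  have hlb3 : ∀ x : Fin m, 3 ≤ cV (Sum.inl x) := fun x => h3 _
  have hub3 : ∀ x : Fin m, cV (Sum.inl x) ≤ m + 2 := fun x => by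
    show c (e (Sum.inl x)) ≤ m + 2
    have := hub (e (Sum.inl x)); omega
  let a : Fin m → ℕ := fun x => cV (Sum.inl x)
  have ha : ∀ x, a x = cV (Sum.inl x) := fun _ => rfl
  have hsuma : (∑ x : Fin m, a x) + 9 = 4 * m + 8 := hsuml
  have hsub3 : (∑ x : Fin m, (a x - 3)) + 3 * m + 9 = 4 * m + 8 := by
    have e1' : ∑ x : Fin m, ((a x - 3) + 3) = ∑ x : Fin m, a x :=
      Finset.sum_congr rfl (fun x _ => by have := hlb3 x; have := ha x; omega)
    have e2' : ∑ x : Fin m, ((a x - 3) + 3) = (∑ x : Fin m, (a x - 3)) + ∑ _x : Fin m, 3 :=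
      Finset.sum_add_distrib
    have e3' : ∑ _x : Fin m, (3 : ℕ) = 3 * m := by simp [mul_comm]
    omega
  -- lower and upper bounds for the decrements
  let lb : Fin m → ℕ := fun x => a x - (m - 1)
  have hlbx : ∀ x, lb x = a x - (m - 1) := fun _ => rfl
  have hubfacts : ∃ ub : Fin m → ℕ, ∀ x, ub x ≤ a x - 3 ∧ ub x ≤ 3 ∧ (a x ≤ 6 → ub x = a x - 3)
      ∧ (6 < a x → ub x = 3) := by
    refine ⟨fun x => if a x ≤ 6 then a x - 3 else 3, fun x => ?_⟩
    dsimp only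
    have h1 := hlb3 x
    have h2 := ha x
    by_cases h : a x ≤ 6
    · have hh : (if a x ≤ 6 then a x - 3 else 3) = a x - 3 := if_pos h
      omega
    · have hh : (if a x ≤ 6 then a x - 3 else 3) = 3 := if_neg h
      omega
  obtain ⟨ub, hubf⟩ := hubfacts
  have hle : ∀ x, lb x ≤ ub x := by
    intro x
    have h1 := hlb3 x
    have h2 := hub3 x
    have h4 := hubf x
    have h5 := hlbx x
    have h6 := ha x
    omega
  have hlbsum : ∑ x, lb x ≤ 3 := by
    classical
    set T : Finset (Fin m) := Finset.univ.filter (fun x => m ≤ a x) with hT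
    have hTeq : ∑ x ∈ T, lb x = ∑ x, lb x := by
      apply Finset.sum_subset (Finset.subset_univ T)
      intro x _ hx
      have h0 : ¬ (m ≤ a x) := fun hh => hx (Finset.mem_filter.mpr ⟨Finset.mem_univ x, hh⟩)
      have h5 := hlbx x
      omega
    rcases T.eq_empty_or_nonempty with hTe | hTne
    · rw [← hTeq, hTe, Finset.sum_empty]
      omega
    · have hTc : 1 ≤ T.card := Finset.card_pos.mpr hTne
      have hA : ∑ x ∈ T, (lb x + (m - 4)) = ∑ x ∈ T, (a x - 3) := by
        apply Finset.sum_congr rfl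
        intro x hx
        have h1 : m ≤ a x := (Finset.mem_filter.mp hx).2
        have h5 := hlbx x
        omega
      have hA2 : ∑ x ∈ T, (lb x + (m - 4)) = (∑ x ∈ T, lb x) + T.card * (m - 4) := by
        rw [Finset.sum_add_distrib, Finset.sum_const, smul_eq_mul]
      have hB : ∑ x ∈ T, (a x - 3) ≤ ∑ x, (a x - 3) :=
        Finset.sum_le_sum_of_subset (Finset.subset_univ T)
      have hC : m - 4 ≤ T.card * (m - 4) := Nat.le_mul_of_pos_left _ (by omega)
      omega
  have hubsum : 3 ≤ ∑ x, ub x := by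
    by_cases hbig : ∃ x, 6 < a x
    · obtain ⟨x, hx⟩ := hbig
      have h1 : ub x = 3 := (hubf x).2.2.2 hx
      have := Finset.single_le_sum (f := ub) (fun i _ => Nat.zero_le _) (Finset.mem_univ x)
      omega
    · push_neg at hbig
      have : ∑ x, ub x = ∑ x, (a x - 3) :=
        Finset.sum_congr rfl (fun x _ => (hubf x).2.2.1 (hbig x))
      omega
  obtain ⟨δ, hδb, hδsum⟩ := exists_sum_between lb ub 3 hle hlbsum hubsum
  obtain ⟨f, hf⟩ := exists_fiber_fun δ hδsum
  have hδfacts : ∀ x, δ x ≤ a x - 3 ∧ a x - (m - 1) ≤ δ x ∧ δ x ≤ 3 := by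
    intro x
    have h1 := (hδb x).1
    have h2 := (hδb x).2
    have h3' := hubf x
    have h5 := hlbx x
    omega
  -- the reduced sequence
  let c' : Fin m → ℕ := fun x => a x - δ x
  have hc'x : ∀ x, c' x = a x - δ x := fun _ => rfl
  have hc'3 : ∀ x, 3 ≤ c' x := by
    intro x
    have h1 := (hδfacts x).1
    have h2 := hlb3 x
    have h5 := hc'x x
    have h6 := ha x
    omega
  have hc'ub : ∀ x, c' x + 1 ≤ m := by
    intro x
    have h1 := (hδfacts x).2.1
    have h2 := hub3 x
    have h5 := hc'x x
    have h6 := ha x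
    omega
  have hc'sum : (∑ x, c' x) + 4 = 4 * m := by
    have e1' : ∑ x : Fin m, (c' x + δ x) = ∑ x : Fin m, a x :=
      Finset.sum_congr rfl (fun x _ => by
        have h1 := (hδfacts x).1
        have h2 := hlb3 x
        have h5 := hc'x x
        have h6 := ha x
        omega)
    have e2' : ∑ x : Fin m, (c' x + δ x) = (∑ x, c' x) + ∑ x, δ x := Finset.sum_add_distrib
    omega
  obtain ⟨G', hG'⟩ := hQ c' hc'3 hc'ub hc'sum
  -- build the extended graph on Fin m ⊕ Fin 3
  let GV : SimpleGraph (Fin m ⊕ Fin 3) :=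
    { Adj := fun p q => match p, q with
        | Sum.inl x, Sum.inl y => G'.Adj x y
        | Sum.inl x, Sum.inr j => f j = x
        | Sum.inr j, Sum.inl x => f j = x
        | Sum.inr i, Sum.inr j => i ≠ j
      symm := ⟨by
        rintro (x|i) (y|j) h
        · exact G'.adj_symm h
        · exact h
        · exact h
        · exact Ne.symm h⟩
      loopless := ⟨by
        rintro (x|i) h
        · exact G'.irrefl h
        · exact h rfl⟩ }
  have hreal : realizes' GV cV := by
    rintro (x|j)
    · have hset : {q | GV.Adj (Sum.inl x) q} =
          (Sum.inl '' {y | G'.Adj x y}) ∪ (Sum.inr '' {j | f j = x}) := by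
        ext (y|j)
        · simp [GV]
        · simp [GV]
      have hdisj : Disjoint (Sum.inl '' {y | G'.Adj x y} : Set (Fin m ⊕ Fin 3))
          (Sum.inr '' {j | f j = x}) := by
        rw [Set.disjoint_left]
        rintro _ ⟨y, _, rfl⟩ ⟨j, _, h⟩
        exact Sum.inl_ne_inr h.symm
      rw [hset, Set.ncard_union_eq hdisj (Set.toFinite _) (Set.toFinite _),
        Set.ncard_image_of_injective _ Sum.inl_injective,
        Set.ncard_image_of_injective _ Sum.inr_injective]
      have h1 := hG' x
      have h2 : {j | f j = x}.ncard = δ x := by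
        rw [Set.ncard_eq_toFinset_card']
        rw [← hf x]
        congr 1
        ext j
        simp
      rw [h1, h2]
      have h4 := (hδfacts x).1
      have h5 := hlb3 x
      have h6 := ha x
      have h7 := hc'x x
      omega
    · have hset : {q | GV.Adj (Sum.inr j) q} =
          insert (Sum.inl (f j)) (Sum.inr '' {i | i ≠ j}) := by
        ext (y|i)
        · simp [GV, eq_comm]
        · simp [GV, ne_comm]
      rw [hset, Set.ncard_insert_of_notMem (by simp) (Set.toFinite _),
        Set.ncard_image_of_injective _ Sum.inr_injective]
      have h2 : {i : Fin 3 | i ≠ j}.ncard = 2 := by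
        rw [Set.ncard_eq_toFinset_card']
        have : {i : Fin 3 | i ≠ j}.toFinset = Finset.univ.erase j := by
          ext i
          simp [Finset.mem_erase]
        rw [this, Finset.card_erase_of_mem (Finset.mem_univ j)]
        simp
      rw [h2, hcV3 j]
  exact exists_realizes_of_equiv e c ⟨GV, hreal⟩



lemma leaf_count {n : ℕ} (D : Fin n → ℕ) (hD : isTreeSeq D) (v : Fin n) :
    D v ≤ ((Finset.univ.erase v).filter (fun i => D i = 1)).card := by
  classical
  set A := (Finset.univ.erase v).filter (fun i => D i = 1) with hA
  have hn : 1 ≤ n := v.pos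
  have h1 : D v + ∑ i ∈ Finset.univ.erase v, D i = 2 * n - 2 := by
    rw [Finset.add_sum_erase _ _ (Finset.mem_univ v)]
    exact hD.2
  have h2 : 2 * (n - 1) ≤ (∑ i ∈ Finset.univ.erase v, D i) + A.card := by
    have e1 : ∑ i ∈ Finset.univ.erase v, (D i + if i ∈ A then 1 else 0)
        = (∑ i ∈ Finset.univ.erase v, D i) + ∑ i ∈ Finset.univ.erase v, (if i ∈ A then 1 else 0) :=
      Finset.sum_add_distrib
    have e2 : ∑ i ∈ Finset.univ.erase v, (if i ∈ A then 1 else 0) = A.card := by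
      rw [Finset.sum_ite_mem]
      have : Finset.univ.erase v ∩ A = A := by
        apply Finset.inter_eq_right.mpr
        exact Finset.filter_subset _ _
      rw [this]
      simp
    have e3 : ∑ _i ∈ Finset.univ.erase v, (2:ℕ) = 2 * (n - 1) := by
      rw [Finset.sum_const, Finset.card_erase_of_mem (Finset.mem_univ v)]
      simp [mul_comm]
    have e4 : ∀ i ∈ Finset.univ.erase v, 2 ≤ D i + (if i ∈ A then 1 else 0) := by
      intro i hi
      by_cases h : i ∈ A
      · have : D i = 1 := (Finset.mem_filter.mp h).2
        rw [if_pos h]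
        omega
      · have h5 : D i ≠ 1 := by
          intro hh
          exact h (Finset.mem_filter.mpr ⟨hi, hh⟩)
        have := hD.1 i
        rw [if_neg h]
        omega
    have := Finset.sum_le_sum e4
    omega
  have hAcard : A.card ≤ n - 1 := by
    calc A.card ≤ (Finset.univ.erase v).card := Finset.card_le_card (Finset.filter_subset _ _)
    _ = n - 1 := by rw [Finset.card_erase_of_mem (Finset.mem_univ v)]; simp
  omega

lemma upper_bound {n : ℕ} (D F : Fin n → ℕ) (hD : isTreeSeq D) (hF : isTreeSeq F)
    (h3 : ∀ i, 3 ≤ D i + F i) (v : Fin n) : D v + F v + 1 ≤ n := by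
  classical
  set A := (Finset.univ.erase v).filter (fun i => D i = 1) with hA
  set B := (Finset.univ.erase v).filter (fun i => F i = 1) with hB
  have hdisj : Disjoint A B := by
    rw [Finset.disjoint_left]
    intro i hiA hiB
    have h1 : D i = 1 := (Finset.mem_filter.mp hiA).2
    have h2 : F i = 1 := (Finset.mem_filter.mp hiB).2
    have := h3 i
    omega
  have hcard : A.card + B.card ≤ n - 1 := by
    calc A.card + B.card = (A ∪ B).card := (Finset.card_union_of_disjoint hdisj).symm
    _ ≤ (Finset.univ.erase v).card :=
        Finset.card_le_card (Finset.union_subset (Finset.filter_subset _ _)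
          (Finset.filter_subset _ _))
    _ = n - 1 := by rw [Finset.card_erase_of_mem (Finset.mem_univ v)]; simp
  have h1 := leaf_count D hD v
  have h2 := leaf_count F hF v
  have hn : 1 ≤ n := v.pos
  rw [← hA] at h1
  rw [← hB] at h2
  omega

lemma Qall (n : ℕ) : Q n := by
  induction n using Nat.strong_induction_on with
  | _ n ih =>
    match n, ih with
    | 0, _ => exact fun c h3 hub hsum => by simp at hsum
    | 1, _ => exact fun c h3 hub hsum => absurd (hub 0) (by have := h3 0; omega)
    | 2, _ => exact fun c h3 hub hsum => absurd (hub 0) (by have := h3 0; omega)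
    | 3, _ => exact fun c h3 hub hsum => absurd (hub 0) (by have := h3 0; omega)
    | 4, _ => exact base4
    | 5, _ => exact base5
    | 6, _ => exact base6
    | (m+7), ih => exact step (by omega) (ih (m+4) (by omega))

theorem sum_graphical_of_no_common_leaves (n : ℕ) (D F : Fin n → ℕ)
    (hD : isTreeSeq D) (hF : isTreeSeq F) (h3 : ∀ i, 3 ≤ D i + F i) :
    ∃ G : SimpleGraph (Fin n), realizes G (fun i => D i + F i) := by
  rcases Nat.eq_zero_or_pos n with rfl | hn
  · exact ⟨⊥, fun v => v.elim0⟩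
  · apply Qall n _ h3 (upper_bound D F hD hF h3)
    have h1 := hD.2; have h2 := hF.2
    have hadd : ∑ i, (D i + F i) = ∑ i, D i + ∑ i, F i := Finset.sum_add_distrib
    omega
end

section
/- The number of labeled trees on vertices v_1,...,v_n (n ≥ 2) in which vertex v_i has degree d_i for all i, where each d_i ≥ 1 and Σ d_i = 2n − 2, equals (n−2)! / ∏_{k=1}^n (d_k − 1)!. -/
open SimpleGraph Finset

namespace TreeCountAux
variable {m : ℕ}

/-! ### Attaching and deleting a leaf -/

def attach (S : SimpleGraph (Fin m)) (j : Fin m) : SimpleGraph (Fin (m+1)) :=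
  S.map Fin.castSuccEmb ⊔ SimpleGraph.edge j.castSucc (Fin.last m)

def dDel (d : Fin (m+1) → ℕ) (j : Fin m) : Fin m → ℕ :=
  fun k => if k = j then d j.castSucc - 1 else d k.castSucc

noncomputable def tcount (n : ℕ) (d : Fin n → ℕ) : ℕ :=
  {T : SimpleGraph (Fin n) | T.IsTree ∧ realizes T d}.ncard

lemma cs_ne_last (a : Fin m) : a.castSucc ≠ Fin.last m := (Fin.castSucc_lt_last a).ne

lemma attach_adj {S : SimpleGraph (Fin m)} {j : Fin m} {a b : Fin (m+1)} :
    (attach S j).Adj a b ↔ (∃ u v, S.Adj u v ∧ u.castSucc = a ∧ v.castSucc = b) ∨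
      (a = j.castSucc ∧ b = Fin.last m) ∨ (a = Fin.last m ∧ b = j.castSucc) := by
  simp only [attach, sup_adj, map_adj, edge_adj, Fin.castSuccEmb, Function.Embedding.coeFn_mk]
  constructor
  · rintro (h | ⟨h | h, -⟩)
    · exact Or.inl h
    · exact Or.inr (Or.inl h)
    · exact Or.inr (Or.inr h)
  · rintro (h | h | h)
    · exact Or.inl h
    · exact Or.inr ⟨Or.inl h, by rintro rfl; exact cs_ne_last j (h.1.symm ▸ h.2)⟩
    · exact Or.inr ⟨Or.inr h, by rintro rfl; exact cs_ne_last j (h.2.symm ▸ h.1)⟩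

lemma attach_adj_last {S : SimpleGraph (Fin m)} {j : Fin m} {b : Fin (m+1)} :
    (attach S j).Adj (Fin.last m) b ↔ b = j.castSucc := by
  rw [attach_adj]
  constructor
  · rintro (⟨u, v, -, hu, -⟩ | ⟨h, -⟩ | ⟨-, h⟩)
    · exact absurd hu (cs_ne_last u)
    · exact absurd h.symm (cs_ne_last j)
    · exact h
  · rintro rfl; exact Or.inr (Or.inr ⟨rfl, rfl⟩)

lemma attach_adj_cs {S : SimpleGraph (Fin m)} {j : Fin m} {a b : Fin m} :
    (attach S j).Adj a.castSucc b.castSucc ↔ S.Adj a b := by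
  rw [attach_adj]
  constructor
  · rintro (⟨u, v, h, hu, hv⟩ | ⟨-, h⟩ | ⟨h, -⟩)
    · rwa [Fin.castSucc_injective _ hu, Fin.castSucc_injective _ hv] at h
    · exact absurd h (cs_ne_last b)
    · exact absurd h (cs_ne_last a)
  · intro h; exact Or.inl ⟨a, b, h, rfl, rfl⟩

lemma attach_adj_cs_last {S : SimpleGraph (Fin m)} {j : Fin m} {a : Fin m} :
    (attach S j).Adj a.castSucc (Fin.last m) ↔ a = j := by
  rw [adj_comm, attach_adj_last]
  exact ⟨fun h => Fin.castSucc_injective _ h, fun h => h ▸ rfl⟩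

def homS (S : SimpleGraph (Fin m)) (j : Fin m) : S →g attach S j where
  toFun := Fin.castSucc
  map_rel' := fun h => attach_adj_cs.mpr h

lemma del_attach (S : SimpleGraph (Fin m)) (j : Fin m) :
    (attach S j).comap (Fin.castSucc : Fin m → Fin (m+1)) = S := by
  ext a b; exact attach_adj_cs

def csHom (A : SimpleGraph (Fin (m+1))) :
    A.comap (Fin.castSucc : Fin m → Fin (m+1)) →g A where
  toFun := Fin.castSucc
  map_rel' := fun h => h

lemma lift_walk {A : SimpleGraph (Fin (m+1))}
    {x y : Fin (m+1)} (p : A.Walk x y) (hp : ∀ z ∈ p.support, z ≠ Fin.last m)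
    {a b : Fin m} (hx : x = a.castSucc) (hy : y = b.castSucc) :
    ∃ q : (A.comap (Fin.castSucc : Fin m → Fin (m+1))).Walk a b,
      q.map (csHom A) = p.copy hx hy := by
  induction p generalizing a b with
  | nil =>
    obtain rfl : a = b := Fin.castSucc_injective _ (hx.symm.trans hy)
    exact ⟨.nil, by subst hx; simp; rfl⟩
  | @cons u v w h p ih =>
    subst hx hy
    have hv : v ≠ Fin.last m := hp v (by simp)
    obtain ⟨c, rfl⟩ := Fin.exists_castSucc_eq.mpr hv
    obtain ⟨q, hq⟩ := ih (fun z hz => hp z (by simp [hz])) rfl rfl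
    refine ⟨.cons (show (A.comap _).Adj a c from h) q, ?_⟩
    simp only [Walk.copy_rfl_rfl] at hq ⊢
    simp [Walk.map_cons, hq]
    rfl

lemma edge_mem_of_walk_to_last {A : SimpleGraph (Fin (m+1))} {c : Fin (m+1)}
    (hnb : ∀ b, A.Adj (Fin.last m) b → b = c)
    {x y : Fin (m+1)} (q : A.Walk x y) (hy : y = Fin.last m) (hx : x ≠ Fin.last m) :
    s(c, Fin.last m) ∈ q.edges := by
  induction q with
  | nil => exact absurd hy hx
  | @cons u v w h q ih =>
    subst hy
    by_cases hv : v = Fin.last m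
    · subst hv
      have : u = c := hnb u h.symm
      subst this
      simp [Sym2.eq_swap]
    · simpa using Or.inr (ih rfl hv)

lemma reach_del {A : SimpleGraph (Fin (m+1))} {j0 : Fin m}
    (hnb : ∀ b, A.Adj (Fin.last m) b → b = j0.castSucc) :
    ∀ (N : ℕ) {x y : Fin (m+1)} (p : A.Walk x y), p.length ≤ N →
    ∀ {u v : Fin m}, x = u.castSucc → y = v.castSucc →
      (A.comap (Fin.castSucc : Fin m → Fin (m+1))).Reachable u v := by
  intro N
  induction N with
  | zero =>
    intro x y p hp u v hx hy
    cases p with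
    | nil =>
      obtain rfl : u = v := Fin.castSucc_injective _ (hx.symm.trans hy)
      exact Reachable.refl _
    | cons h q => simp at hp
  | succ N ih =>
    intro x y p hp u v hx hy
    cases p with
    | nil =>
      obtain rfl : u = v := Fin.castSucc_injective _ (hx.symm.trans hy)
      exact Reachable.refl _
    | @cons _ z _ h q =>
      subst hx hy
      by_cases hz : z = Fin.last m
      · subst hz
        have hu : u.castSucc = j0.castSucc := hnb _ h.symm
        obtain rfl : u = j0 := Fin.castSucc_injective _ hu
        have hq : ¬ q.Nil := Walk.not_nil_of_ne (Ne.symm (cs_ne_last v))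
        obtain ⟨z', h', q', rfl⟩ := (Walk.not_nil_iff).mp hq
        have hz' := hnb _ h'
        subst hz'
        exact ih q' (by simp at hp; omega) rfl rfl
      · obtain ⟨w, rfl⟩ := Fin.exists_castSucc_eq.mpr hz
        have h1 : (A.comap (Fin.castSucc : Fin m → Fin (m+1))).Adj u w := h
        exact h1.reachable.trans (ih q (by simp at hp; omega) rfl rfl)

lemma del_isTree [NeZero m] {T : SimpleGraph (Fin (m+1))} (hT : T.IsTree) {j0 : Fin m}
    (hnb : ∀ b, T.Adj (Fin.last m) b → b = j0.castSucc) :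
    (T.comap (Fin.castSucc : Fin m → Fin (m+1))).IsTree := by
  constructor
  · constructor
    intro u v
    obtain ⟨p⟩ := hT.isConnected.preconnected u.castSucc v.castSucc
    exact reach_del hnb p.length p le_rfl rfl rfl
  · intro v c hc
    have := hc.map (f := csHom T) (Fin.castSucc_injective m)
    exact hT.IsAcyclic _ this

lemma attach_isTree {S : SimpleGraph (Fin m)} (hS : S.IsTree) (j : Fin m) :
    (attach S j).IsTree := by
  constructor
  · have key : ∀ a : Fin (m+1), (attach S j).Reachable a j.castSucc := by
      intro a
      induction a using Fin.lastCases with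
      | last => exact (attach_adj_last.mpr rfl).reachable
      | cast b =>
        have := hS.isConnected.preconnected b j
        exact this.map (homS S j)
    constructor
    intro u v
    exact (key u).trans (key v).symm
  · intro v c hc
    by_cases hL : Fin.last m ∈ c.support
    · set c' := c.rotate (Fin.last m) hL with hc'
      have hcyc : c'.IsCycle := hc.rotate hL
      have hnn : ¬ c'.Nil := hcyc.not_nil
      obtain ⟨z, h, q, hq⟩ := Walk.not_nil_iff.mp hnn
      have hz : z = j.castSucc := attach_adj_last.mp h
      subst hz
      have hmem : s(j.castSucc, Fin.last m) ∈ q.edges :=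
        edge_mem_of_walk_to_last (fun b hb => attach_adj_last.mp hb) q rfl (cs_ne_last j)
      have hnodup := hcyc.edges_nodup
      rw [hq] at hnodup
      simp only [Walk.edges_cons, List.nodup_cons] at hnodup
      exact hnodup.1 (by rwa [Sym2.eq_swap])
    · have hv : v ≠ Fin.last m := fun h => hL (h ▸ c.start_mem_support)
      obtain ⟨a, rfl⟩ := Fin.exists_castSucc_eq.mpr hv
      obtain ⟨q, hq⟩ := lift_walk c (fun z hz => fun h => hL (h ▸ hz)) rfl rfl
      have hq' : q.map (csHom (attach S j)) = c := by simpa using hq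
      have hqc : q.IsCycle := by
        have hinj : Function.Injective ⇑(csHom (attach S j)) := Fin.castSucc_injective m
        rw [← Walk.map_isCycle_iff_of_injective hinj, hq']
        exact hc
      have : IsAcyclic ((attach S j).comap (Fin.castSucc : Fin m → Fin (m+1))) := by
        rw [del_attach]; exact hS.IsAcyclic
      exact this _ hqc

/-! ### Degrees -/

lemma nb_attach_last (S : SimpleGraph (Fin m)) (j : Fin m) :
    {u | (attach S j).Adj (Fin.last m) u} = {j.castSucc} := by
  ext u; simp [attach_adj_last]

lemma nb_attach_cs (S : SimpleGraph (Fin m)) (j : Fin m) (a : Fin m) (ha : a ≠ j) :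
    {u | (attach S j).Adj a.castSucc u} =
      (Fin.castSucc : Fin m → Fin (m+1)) '' {u | S.Adj a u} := by
  ext u
  induction u using Fin.lastCases with
  | last =>
    simp only [Set.mem_setOf_eq, attach_adj_cs_last, Set.mem_image]
    constructor
    · exact fun h => absurd h ha
    · rintro ⟨x, -, hx⟩; exact absurd hx (cs_ne_last x)
  | cast b =>
    simp only [Set.mem_setOf_eq, attach_adj_cs, Set.mem_image]
    constructor
    · exact fun h => ⟨b, h, rfl⟩
    · rintro ⟨x, hx, h⟩
      rwa [← Fin.castSucc_injective _ h]

lemma nb_attach_cs_eq (S : SimpleGraph (Fin m)) (j : Fin m) :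
    {u | (attach S j).Adj j.castSucc u} =
      insert (Fin.last m) ((Fin.castSucc : Fin m → Fin (m+1)) '' {u | S.Adj j u}) := by
  ext u
  induction u using Fin.lastCases with
  | last => simp [attach_adj_cs_last]
  | cast b =>
    simp only [Set.mem_setOf_eq, attach_adj_cs, Set.mem_insert_iff, Set.mem_image]
    constructor
    · exact fun h => Or.inr ⟨b, h, rfl⟩
    · rintro (h | ⟨x, hx, h⟩)
      · exact absurd h (cs_ne_last b)
      · rwa [← Fin.castSucc_injective _ h]

lemma realizes_attach {S : SimpleGraph (Fin m)} {j : Fin m} {d : Fin (m+1) → ℕ}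
    (hL : d (Fin.last m) = 1) (hj : 1 ≤ d j.castSucc)
    (hS : realizes S (dDel d j)) : realizes (attach S j) d := by
  intro v
  induction v using Fin.lastCases with
  | last => rw [nb_attach_last, Set.ncard_singleton, hL]
  | cast a =>
    by_cases ha : a = j
    · subst ha
      rw [nb_attach_cs_eq, Set.ncard_insert_of_notMem (by
          rintro ⟨x, -, hx⟩; exact cs_ne_last x hx),
        Set.ncard_image_of_injective _ (Fin.castSucc_injective m)]
      have h1 : {u | S.Adj a u}.ncard = d a.castSucc - 1 := by simpa [dDel] using hS a
      omega
    · rw [nb_attach_cs S j a ha,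
        Set.ncard_image_of_injective _ (Fin.castSucc_injective m)]
      simpa [dDel, ha] using hS a

lemma range_cs : Set.range (Fin.castSucc : Fin m → Fin (m+1)) = {Fin.last m}ᶜ := by
  ext x
  simp only [Set.mem_range, Set.mem_compl_iff, Set.mem_singleton_iff]
  exact ⟨fun ⟨y, hy⟩ => hy ▸ cs_ne_last y, fun h => Fin.exists_castSucc_eq.mpr h⟩

lemma ncard_preimage_cs (s : Set (Fin (m+1))) :
    ((Fin.castSucc : Fin m → Fin (m+1)) ⁻¹' s).ncard = (s \ {Fin.last m}).ncard := by
  rw [← Set.ncard_image_of_injective _ (Fin.castSucc_injective m),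
    Set.image_preimage_eq_inter_range, range_cs, Set.diff_eq]

lemma realizes_del {T : SimpleGraph (Fin (m+1))} {d : Fin (m+1) → ℕ} {j : Fin m}
    (hT : realizes T d) (hnb : ∀ b, T.Adj (Fin.last m) b → b = j.castSucc)
    (hadj : T.Adj (Fin.last m) j.castSucc) :
    realizes (T.comap (Fin.castSucc : Fin m → Fin (m+1))) (dDel d j) := by
  intro a
  have h0 : {u | (T.comap (Fin.castSucc : Fin m → Fin (m+1))).Adj a u} =
      (Fin.castSucc : Fin m → Fin (m+1)) ⁻¹' {u | T.Adj a.castSucc u} := rfl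
  rw [h0, ncard_preimage_cs]
  by_cases ha : a = j
  · subst ha
    rw [Set.ncard_diff_singleton_of_mem (by exact hadj.symm), hT a.castSucc]
    simp [dDel]
  · rw [Set.diff_singleton_eq_self (fun h => by
      have := hnb _ (Set.mem_setOf_eq ▸ h).symm
      exact ha (Fin.castSucc_injective _ this)), hT a.castSucc]
    simp [dDel, ha]

/-! ### The splitting bijection -/

lemma attach_injective (j : Fin m) : Function.Injective (fun S => attach S j) := by
  intro S1 S2 h
  have := congrArg (SimpleGraph.comap (Fin.castSucc : Fin m → Fin (m+1))) h
  rwa [del_attach, del_attach] at this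

lemma attach_del {T : SimpleGraph (Fin (m+1))} {j : Fin m}
    (hadj : T.Adj (Fin.last m) j.castSucc)
    (hnb : ∀ b, T.Adj (Fin.last m) b → b = j.castSucc) :
    attach (T.comap (Fin.castSucc : Fin m → Fin (m+1))) j = T := by
  ext a b
  induction a using Fin.lastCases with
  | last =>
    rw [attach_adj_last]
    constructor
    · rintro rfl; exact hadj
    · exact fun h => hnb b h
  | cast a =>
    induction b using Fin.lastCases with
    | last =>
      rw [attach_adj_cs_last]
      constructor
      · rintro rfl; exact hadj.symm
      · exact fun h => Fin.castSucc_injective _ (hnb _ h.symm)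
    | cast b => rw [attach_adj_cs]; rfl

lemma tcount_eq_card (n : ℕ) (d : Fin n → ℕ)
    [DecidablePred (fun T : SimpleGraph (Fin n) => T.IsTree ∧ realizes T d)] :
    tcount n d =
      (univ.filter (fun T : SimpleGraph (Fin n) => T.IsTree ∧ realizes T d)).card := by
  rw [tcount, ← Set.ncard_coe_finset]
  congr 1
  ext T
  simp

lemma split (m : ℕ) (hm : 2 ≤ m) (d : Fin (m+1) → ℕ) (hd1 : ∀ i, 1 ≤ d i)
    (hL : d (Fin.last m) = 1) :
    tcount (m+1) d = ∑ j : Fin m, tcount m (dDel d j) := by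
  classical
  have : NeZero m := ⟨by omega⟩
  set P : SimpleGraph (Fin (m+1)) → Prop := fun T => T.IsTree ∧ realizes T d with hP
  have hnbr : ∀ T, P T → ∃ j : Fin m, T.Adj (Fin.last m) j.castSucc ∧
      (∀ b, T.Adj (Fin.last m) b → b = j.castSucc) := by
    rintro T ⟨ht, hr⟩
    have h1 : {u | T.Adj (Fin.last m) u}.ncard = 1 := (hr _).trans hL
    obtain ⟨b, hb⟩ := Set.ncard_eq_one.mp h1
    have hbmem : T.Adj (Fin.last m) b := by
      have : b ∈ {u | T.Adj (Fin.last m) u} := hb ▸ rfl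
      exact this
    obtain ⟨j, rfl⟩ := Fin.exists_castSucc_eq.mpr hbmem.ne'
    refine ⟨j, hbmem, fun c hc => ?_⟩
    have : c ∈ {u | T.Adj (Fin.last m) u} := hc
    rwa [hb, Set.mem_singleton_iff] at this
  set f : SimpleGraph (Fin (m+1)) → Fin m := fun T =>
    if h : ∃ j : Fin m, T.Adj (Fin.last m) j.castSucc then h.choose else ⟨0, by omega⟩
    with hf
  have hfspec : ∀ T, P T → (T.Adj (Fin.last m) (f T).castSucc ∧
      ∀ b, T.Adj (Fin.last m) b → b = (f T).castSucc) := by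
    intro T hT
    obtain ⟨j, hj, hju⟩ := hnbr T hT
    have hex : ∃ j : Fin m, T.Adj (Fin.last m) j.castSucc := ⟨j, hj⟩
    have h1 : f T = hex.choose := by rw [hf]; exact dif_pos hex
    have h2 : T.Adj (Fin.last m) (hex.choose).castSucc := hex.choose_spec
    rw [h1]
    exact ⟨h2, fun b hb => (hju _ hb).trans (hju _ h2).symm⟩
  rw [tcount_eq_card]
  rw [Finset.card_eq_sum_card_fiberwise (f := f) (t := univ) (fun x _ => mem_univ _)]
  refine Finset.sum_congr rfl fun j _ => ?_
  rw [tcount_eq_card]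
  have himg : (univ.filter P).filter (fun T => f T = j) =
      Finset.image (fun S => attach S j)
        (univ.filter (fun S : SimpleGraph (Fin m) => S.IsTree ∧ realizes S (dDel d j))) := by
    ext T
    simp only [mem_filter, mem_univ, true_and, mem_image]
    constructor
    · rintro ⟨hT, hfT⟩
      obtain ⟨hadj, huniq⟩ := hfspec T hT
      rw [hfT] at hadj huniq
      refine ⟨T.comap (Fin.castSucc : Fin m → Fin (m+1)),
        ⟨del_isTree hT.1 huniq, realizes_del hT.2 huniq hadj⟩, attach_del hadj huniq⟩
    · rintro ⟨S, ⟨ht, hr⟩, rfl⟩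
      have hadj : (attach S j).Adj (Fin.last m) j.castSucc := attach_adj_last.mpr rfl
      have hPT : P (attach S j) := ⟨attach_isTree ht j, realizes_attach hL (hd1 _) hr⟩
      refine ⟨hPT, ?_⟩
      obtain ⟨-, huniq⟩ := hfspec _ hPT
      exact (Fin.castSucc_injective _ (huniq _ hadj)).symm
  rw [himg, Finset.card_image_of_injective _ (attach_injective j)]

/-! ### Relabeling, degenerate counts, base case -/

lemma isAcyclic_of_iso {V W : Type*} {G : SimpleGraph V} {H : SimpleGraph W}
    (f : G ≃g H) (hG : G.IsAcyclic) : H.IsAcyclic := by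
  intro v c hc
  have hinj : Function.Injective ⇑f.symm.toHom := f.symm.injective
  exact hG _ ((Walk.map_isCycle_iff_of_injective hinj).mpr hc)

def isoComap {V W : Type*} (e : V ≃ W) (G : SimpleGraph W) : G.comap ⇑e ≃g G :=
  { toEquiv := e, map_rel_iff' := Iff.rfl }

lemma isTree_comap {n : ℕ} (e : Equiv.Perm (Fin n)) {G : SimpleGraph (Fin n)}
    (hG : G.IsTree) : (G.comap ⇑e).IsTree := by
  constructor
  · rw [(isoComap e G).connected_iff]
    exact hG.isConnected
  · exact isAcyclic_of_iso (isoComap e G).symm hG.IsAcyclic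

lemma realizes_comap {n : ℕ} (e : Equiv.Perm (Fin n)) {G : SimpleGraph (Fin n)}
    {d : Fin n → ℕ} (hG : realizes G d) : realizes (G.comap ⇑e) (d ∘ ⇑e) := by
  intro v
  have h1 : {u | (G.comap ⇑e).Adj v u} = ⇑e ⁻¹' {u | G.Adj (e v) u} := rfl
  have h2 : ⇑e ⁻¹' {u | G.Adj (e v) u} = ⇑e.symm '' {u | G.Adj (e v) u} := by
    rw [Equiv.image_eq_preimage_symm]
    simp
  rw [h1, h2, Set.ncard_image_of_injective _ e.symm.injective]
  exact hG (e v)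

lemma tcount_relabel {n : ℕ} (d : Fin n → ℕ) (e : Equiv.Perm (Fin n)) :
    tcount n (d ∘ ⇑e) = tcount n d := by
  rw [tcount, tcount]
  have himg : {T : SimpleGraph (Fin n) | T.IsTree ∧ realizes T d} =
      (fun T : SimpleGraph (Fin n) => T.comap ⇑e.symm) ''
        {T : SimpleGraph (Fin n) | T.IsTree ∧ realizes T (d ∘ ⇑e)} := by
    ext T
    simp only [Set.mem_setOf_eq, Set.mem_image]
    constructor
    · rintro ⟨ht, hr⟩
      refine ⟨T.comap ⇑e, ⟨isTree_comap e ht, realizes_comap e hr⟩, ?_⟩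
      rw [comap_comap]
      simp
    · rintro ⟨S, ⟨ht, hr⟩, rfl⟩
      refine ⟨isTree_comap e.symm ht, fun v => ?_⟩
      have := realizes_comap e.symm hr v
      simpa using this
  rw [himg, Set.ncard_image_of_injective]
  intro S1 S2 h
  have := congrArg (fun G : SimpleGraph (Fin n) => G.comap ⇑e) h
  simp only [comap_comap] at this
  simpa using this

lemma tcount_zero (m : ℕ) (hm : 2 ≤ m) (d : Fin m → ℕ) (j : Fin m) (hdj : d j = 0) :
    tcount m d = 0 := by
  rw [tcount, Set.ncard_eq_zero]
  ext T
  simp only [Set.mem_setOf_eq, Set.mem_empty_iff_false, iff_false, not_and]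
  intro ht hr
  have hnt : Nontrivial (Fin m) := Fin.nontrivial_iff_two_le.mpr hm
  obtain ⟨w, hw⟩ := exists_ne j
  obtain ⟨p⟩ := ht.isConnected.preconnected j w
  have hp : ¬ p.Nil := Walk.not_nil_of_ne (Ne.symm hw)
  obtain ⟨z, h, q, -⟩ := Walk.not_nil_iff.mp hp
  have hmem : z ∈ {u | T.Adj j u} := h
  have hpos : 0 < {u | T.Adj j u}.ncard := by
    rw [Set.ncard_pos (Set.toFinite _)]
    exact ⟨z, hmem⟩
  have := hr j
  rw [hdj] at this
  omega

lemma tcount_base (d : Fin 2 → ℕ) (hd : ∀ i, d i = 1) : tcount 2 d = 1 := by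
  rw [tcount]
  have hset : {T : SimpleGraph (Fin 2) | T.IsTree ∧ realizes T d} = {⊤} := by
    ext T
    simp only [Set.mem_setOf_eq, Set.mem_singleton_iff]
    constructor
    · rintro ⟨ht, -⟩
      obtain ⟨p⟩ := ht.isConnected.preconnected 0 1
      have hp : ¬ p.Nil := Walk.not_nil_of_ne (by decide)
      obtain ⟨z, h, -, -⟩ := Walk.not_nil_iff.mp hp
      have hz : z = 1 := by
        have h0 : z ≠ 0 := h.ne'
        omega
      subst hz
      ext a b
      constructor
      · exact fun hh => (SimpleGraph.top_adj a b).mpr hh.ne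
      · intro hh
        fin_cases a <;> fin_cases b
        · exact absurd hh (by simp)
        · exact h
        · exact h.symm
        · exact absurd hh (by simp)
    · rintro rfl
      refine ⟨⟨?_, ?_⟩, ?_⟩
      · constructor
        intro u v
        rcases eq_or_ne u v with rfl | h
        · exact Reachable.refl _
        · exact ((SimpleGraph.top_adj u v).mpr h).reachable
      · intro v c hc
        have h3 := hc.three_le_length
        have hnd := hc.2
        have hlen : c.support.tail.length = c.length := by
          have h4 := c.length_support
          have h5 : c.support.tail.length = c.support.length - 1 := by
            cases c.support with
            | nil => simp
            | cons x l => simp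
          omega
        have := hnd.length_le_card
        simp [hlen] at this
        omega
      · intro v
        rw [hd v]
        have hset2 : {u | (⊤ : SimpleGraph (Fin 2)).Adj v u} = {v + 1} := by
          ext u
          simp only [Set.mem_setOf_eq, Set.mem_singleton_iff, SimpleGraph.top_adj]
          exact (by decide : ∀ v u : Fin 2, v ≠ u ↔ u = v + 1) v u
        rw [hset2, Set.ncard_singleton]
  rw [hset, Set.ncard_singleton]

/-! ### The induction -/

lemma step (m : ℕ) (hm : 2 ≤ m)
    (IH : ∀ d : Fin m → ℕ, (∀ i, 1 ≤ d i) → (∑ i, d i) = 2*m - 2 →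
      tcount m d * ∏ k, Nat.factorial (d k - 1) = Nat.factorial (m - 2))
    (d : Fin (m+1) → ℕ) (hd1 : ∀ i, 1 ≤ d i) (hd2 : ∑ i, d i = 2*(m+1) - 2)
    (hL : d (Fin.last m) = 1) :
    tcount (m+1) d * ∏ k, Nat.factorial (d k - 1) = Nat.factorial (m+1-2) := by
  have hsc := Fin.sum_univ_castSucc (f := d)
  have hsum : ∑ k : Fin m, d k.castSucc = 2*m - 1 := by omega
  have hP : (∏ k, Nat.factorial (d k - 1)) =
      ∏ k : Fin m, Nat.factorial (d k.castSucc - 1) := by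
    rw [Fin.prod_univ_castSucc, hL]
    simp
  rw [split m hm d hd1 hL, hP, Finset.sum_mul]
  have hterm : ∀ j : Fin m,
      tcount m (dDel d j) * ∏ k : Fin m, Nat.factorial (d k.castSucc - 1)
      = (d j.castSucc - 1) * Nat.factorial (m - 2) := by
    intro j
    by_cases h2 : 2 ≤ d j.castSucc
    · have hd1' : ∀ i, 1 ≤ dDel d j i := by
        intro i
        unfold dDel
        split
        · omega
        · exact hd1 _
      have hsum' : ∑ i, dDel d j i = 2*m - 2 := by
        have e1 : dDel d j j + ∑ k ∈ univ.erase j, dDel d j k = ∑ k, dDel d j k :=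
          Finset.add_sum_erase univ (dDel d j) (mem_univ j)
        have e2 : d j.castSucc + ∑ k ∈ univ.erase j, d k.castSucc
            = ∑ k : Fin m, d k.castSucc :=
          Finset.add_sum_erase univ (fun k : Fin m => d k.castSucc) (mem_univ j)
        have e3 : ∑ k ∈ univ.erase j, dDel d j k =
            ∑ k ∈ univ.erase j, d k.castSucc :=
          Finset.sum_congr rfl fun i hi => by
            unfold dDel; rw [if_neg (Finset.ne_of_mem_erase hi)]
        have e4 : dDel d j j = d j.castSucc - 1 := by unfold dDel; simp
        omega
      have hIH := IH (dDel d j) hd1' hsum'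
      have hfac : Nat.factorial (d j.castSucc - 1) =
          (d j.castSucc - 1) * Nat.factorial (dDel d j j - 1) := by
        have e4 : dDel d j j = d j.castSucc - 1 := by unfold dDel; simp
        rw [e4]
        have h5 : d j.castSucc - 1 = (d j.castSucc - 1 - 1) + 1 := by omega
        conv_lhs => rw [h5]
        rw [Nat.factorial_succ]
        congr 1
        omega
      have hprod : ∏ k : Fin m, Nat.factorial (d k.castSucc - 1) =
          (d j.castSucc - 1) * ∏ k : Fin m, Nat.factorial (dDel d j k - 1) := by
        rw [← Finset.mul_prod_erase _ _ (mem_univ j),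
            ← Finset.mul_prod_erase _ (fun k => Nat.factorial (dDel d j k - 1)) (mem_univ j)]
        have herase : ∏ k ∈ univ.erase j, Nat.factorial (d k.castSucc - 1) =
            ∏ k ∈ univ.erase j, Nat.factorial (dDel d j k - 1) :=
          Finset.prod_congr rfl fun i hi => by
            unfold dDel; rw [if_neg (Finset.ne_of_mem_erase hi)]
        rw [herase, hfac, mul_assoc]
      rw [hprod, ← mul_assoc, mul_comm (tcount m (dDel d j)) _, mul_assoc, hIH]
    · have h1 : d j.castSucc = 1 := by have := hd1 j.castSucc; omega
      have h0 : dDel d j j = 0 := by unfold dDel; simp [h1]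
      rw [tcount_zero m hm _ j h0, h1]
      simp
  rw [Finset.sum_congr rfl (fun j _ => hterm j), ← Finset.sum_mul]
  have hsm : ∑ j : Fin m, (d j.castSucc - 1) = m - 1 := by
    have e5 : ∑ j : Fin m, ((d j.castSucc - 1) + 1) = ∑ j : Fin m, d j.castSucc :=
      Finset.sum_congr rfl fun i _ => by have := hd1 i.castSucc; omega
    rw [Finset.sum_add_distrib] at e5
    simp only [Finset.sum_const, card_univ, Fintype.card_fin, smul_eq_mul, mul_one] at e5
    omega
  rw [hsm]
  have hfac2 : Nat.factorial (m - 1) = (m-1) * Nat.factorial (m-2) := by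
    have h : m - 1 = (m - 2) + 1 := by omega
    rw [h, Nat.factorial_succ]
  rw [show m + 1 - 2 = m - 1 by omega, hfac2]

lemma main : ∀ n, 2 ≤ n → ∀ d : Fin n → ℕ, (∀ i, 1 ≤ d i) → (∑ i, d i) = 2*n-2 →
    tcount n d * ∏ k, Nat.factorial (d k - 1) = Nat.factorial (n-2) := by
  intro n hn
  induction n, hn using Nat.le_induction with
  | base =>
    intro d hd1 hd2
    have hs2 : d 0 + d 1 = 2 := by
      have := Fin.sum_univ_two d
      omega
    have hall : ∀ i, d i = 1 := by
      intro i
      have h0 := hd1 0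
      have h1 := hd1 1
      have hcase : i = 0 ∨ i = 1 := by omega
      rcases hcase with rfl | rfl <;> omega
    rw [tcount_base d hall]
    simp [hall]
  | succ m hm ih =>
    intro d hd1 hd2
    have hex : ∃ i, d i = 1 := by
      by_contra hno
      push_neg at hno
      have hge : 2*(m+1) ≤ ∑ i, d i := by
        calc 2*(m+1) = ∑ _i : Fin (m+1), 2 := by simp [mul_comm]
        _ ≤ ∑ i, d i := Finset.sum_le_sum fun i _ => by
            have := hd1 i; have := hno i; omega
      omega
    obtain ⟨i, hi⟩ := hex
    set e : Equiv.Perm (Fin (m+1)) := Equiv.swap (Fin.last m) i with he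
    have h1 : (d ∘ ⇑e) (Fin.last m) = 1 := by
      simp only [Function.comp_apply, he, Equiv.swap_apply_left]
      exact hi
    have h2 : ∀ k, 1 ≤ (d ∘ ⇑e) k := fun k => hd1 _
    have h3 : ∑ k, (d ∘ ⇑e) k = 2*(m+1) - 2 := by
      simp only [Function.comp_apply]
      rw [Equiv.sum_comp e d]
      exact hd2
    have h4 := step m hm ih (d ∘ ⇑e) h2 h3 h1
    rw [tcount_relabel d e] at h4
    have h5 : ∏ k, Nat.factorial ((d ∘ ⇑e) k - 1) = ∏ k, Nat.factorial (d k - 1) := by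
      simp only [Function.comp_apply]
      exact Equiv.prod_comp e fun k => Nat.factorial (d k - 1)
    rwa [h5] at h4

end TreeCountAux

theorem tree_count_with_degree_sequence (n : ℕ) (hn : 2 ≤ n) (d : Fin n → ℕ)
    (hd : isTreeSeq d) :
    {T : SimpleGraph (Fin n) | T.IsTree ∧ realizes T d}.ncard *
        ∏ k, Nat.factorial (d k - 1) = Nat.factorial (n - 2) :=
  TreeCountAux.main n hn d hd.1 hd.2
end

section
/- Let (d_1,...,d_n) be a tree degree sequence with n ≥ 3 and let i ≠ j. The number of labeled trees on {v_1,...,v_n} with degree sequence (d_1,...,d_n) in which v_i and v_j are adjacent equals (d_i + d_j − 2)·(n−3)! / ∏_{k=1}^n (d_k − 1)!. -/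
open SimpleGraph Set Finset

variable {V : Type} {G : SimpleGraph V}

lemma walk_from_unique_nbr_edge {ℓ m u : V} (hnb : ∀ y, G.Adj ℓ y → y = m)
    (q : G.Walk ℓ u) (hu : u ≠ ℓ) : s(ℓ, m) ∈ q.edges := by
  cases q with
  | nil => exact absurd rfl hu
  | @cons _ b _ h q' => have : b = m := hnb b h; subst this; simp

lemma walk_to_unique_nbr_edge {ℓ m u : V} (hnb : ∀ y, G.Adj ℓ y → y = m)
    (q : G.Walk u ℓ) (hu : u ≠ ℓ) : s(ℓ, m) ∈ q.edges := by
  have := walk_from_unique_nbr_edge hnb q.reverse hu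
  rwa [SimpleGraph.Walk.edges_reverse, List.mem_reverse] at this

lemma no_cycle_at_unique_nbr [DecidableEq V] {ℓ m : V} (hnb : ∀ y, G.Adj ℓ y → y = m)
    (c : G.Walk ℓ ℓ) (hc : c.IsCycle) : False := by
  cases c with
  | nil => exact hc.ne_nil rfl
  | @cons _ b _ h q =>
    have hb : b = m := hnb b h
    rw [SimpleGraph.Walk.cons_isCycle_iff] at hc
    have hbℓ : b ≠ ℓ := fun hh => (G.loopless.irrefl ℓ (hh ▸ h))
    have hin := walk_to_unique_nbr_edge hnb q hbℓ
    rw [← hb] at hin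
    exact hc.2 hin

/-- A cycle avoids any vertex with a unique neighbor. -/
lemma cycle_avoids_unique_nbr [DecidableEq V] {ℓ m : V} (hnb : ∀ y, G.Adj ℓ y → y = m)
    {v : V} {p : G.Walk v v} (hp : p.IsCycle) : ℓ ∉ p.support := fun hmem =>
  no_cycle_at_unique_nbr hnb (p.rotate ℓ hmem) (hp.rotate hmem)

/-- A path between two vertices different from `ℓ` avoids `ℓ`, if `ℓ` has a unique
neighbor. -/
lemma path_avoids_unique_nbr {ℓ m : V} (hnb : ∀ y, G.Adj ℓ y → y = m) :
    ∀ {u v : V} (p : G.Walk u v), p.IsPath → u ≠ ℓ → v ≠ ℓ → ℓ ∉ p.support := by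
  intro u v p
  induction p with
  | nil => intro _ hu _ ; simpa using fun h => hu h.symm
  | @cons a b c h q ih =>
    intro hp hu hv
    rw [SimpleGraph.Walk.cons_isPath_iff] at hp
    by_cases hb : b = ℓ
    · subst hb
      have ha : a = m := hnb a h.symm
      exfalso
      cases q with
      | nil => exact hv rfl
      | @cons _ b' _ h' q' =>
        have hb' : b' = m := hnb b' h'
        apply hp.2
        rw [SimpleGraph.Walk.support_cons]
        refine List.mem_cons_of_mem _ ?_
        subst ha; subst hb'
        exact q'.start_mem_support
    · rw [SimpleGraph.Walk.support_cons]
      intro hmem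
      rcases List.mem_cons.1 hmem with h1 | h2
      · exact hu h1.symm
      · exact ih hp.1 hb hv h2

/-- membership propagates along reachability in adjacency-closed sets -/
lemma reachable_mem_closed {A : Set V} (hA : ∀ x ∈ A, ∀ y, G.Adj x y → y ∈ A)
    {u v : V} (h : G.Reachable u v) (hu : u ∈ A) : v ∈ A := by
  obtain ⟨p⟩ := h
  induction p with
  | nil => exact hu
  | @cons a b c h q ih => exact ih (hA a hu b h)

/-- lift a walk whose support lies in `s` to the induced subgraph -/
lemma exists_walk_induce {s : Set V} :
    ∀ {u v : V} (p : G.Walk u v) (hu : u ∈ s) (hv : v ∈ s),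
      (∀ x ∈ p.support, x ∈ s) →
      ∃ q : (G.induce s).Walk ⟨u, hu⟩ ⟨v, hv⟩,
        q.map (SimpleGraph.Embedding.induce s).toHom = p := by
  intro u v p
  induction p with
  | nil => intro hu _ _; exact ⟨SimpleGraph.Walk.nil, rfl⟩
  | @cons a b c h q ih =>
    intro hu hv hsup
    have hb : b ∈ s := hsup b (by simp [SimpleGraph.Walk.support_cons])
    obtain ⟨q', hq'⟩ := ih hb hv (fun x hx => hsup x (by
      rw [SimpleGraph.Walk.support_cons]; exact List.mem_cons_of_mem _ hx))
    refine ⟨SimpleGraph.Walk.cons (by exact h : (G.induce s).Adj ⟨a, hu⟩ ⟨b, hb⟩) q', ?_⟩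
    subst hq'; rfl

variable {V : Type} {G : SimpleGraph V}

lemma nbhd_eq_singleton {ℓ m : V} (h1 : {u | G.Adj ℓ u}.ncard = 1) (hadj : G.Adj ℓ m) :
    {u | G.Adj ℓ u} = {m} := by
  obtain ⟨a, ha⟩ := Set.ncard_eq_one.1 h1
  have hm : m ∈ {u | G.Adj ℓ u} := hadj
  rw [ha] at hm ⊢
  rw [Set.mem_singleton_iff] at hm
  rw [hm]

lemma unique_nbr_of_singleton {ℓ m : V} (h : {u | G.Adj ℓ u} = {m}) :
    ∀ y, G.Adj ℓ y → y = m := by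
  intro y hy
  have : y ∈ {u | G.Adj ℓ u} := hy
  rwa [h, Set.mem_singleton_iff] at this

lemma induce_connected_of_unique_nbr [DecidableEq V] (hconn : G.Connected) {ℓ m : V}
    (hnb : ∀ y, G.Adj ℓ y → y = m) (hm : m ≠ ℓ) :
    (G.induce {v | v ≠ ℓ}).Connected := by
  rw [SimpleGraph.connected_iff_exists_forall_reachable]
  refine ⟨⟨m, hm⟩, fun v => ?_⟩
  obtain ⟨w⟩ := hconn.preconnected m ↑v
  have hp := w.toPath
  have hℓ : ℓ ∉ (w.toPath : G.Walk m ↑v).support :=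
    path_avoids_unique_nbr hnb _ (w.toPath).isPath hm v.2
  have hsup : ∀ x ∈ (w.toPath : G.Walk m ↑v).support, x ∈ {v : V | v ≠ ℓ} :=
    fun x hx => fun hxx => hℓ (hxx ▸ hx)
  obtain ⟨q, -⟩ := exists_walk_induce (w.toPath : G.Walk m ↑v) hm v.2 hsup
  exact ⟨(q.copy rfl (Subtype.coe_eta v v.2))⟩

/-- Attach a leaf `ℓ` to vertex `m` of a graph on `V \ {ℓ}`. -/
def addLeaf {V : Type} (ℓ m : V) (hm : m ≠ ℓ)
    (T' : SimpleGraph ↥({v | v ≠ ℓ} : Set V)) : SimpleGraph V where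
  Adj u v := (∃ (hu : u ≠ ℓ) (hv : v ≠ ℓ), T'.Adj ⟨u, hu⟩ ⟨v, hv⟩) ∨
    (u = ℓ ∧ v = m) ∨ (u = m ∧ v = ℓ)
  symm := by
    constructor
    rintro u v (⟨hu, hv, h⟩ | ⟨h1, h2⟩ | ⟨h1, h2⟩)
    · exact Or.inl ⟨hv, hu, h.symm⟩
    · exact Or.inr (Or.inr ⟨h2, h1⟩)
    · exact Or.inr (Or.inl ⟨h2, h1⟩)
  loopless := by
    constructor
    rintro v (⟨hu, hv, h⟩ | ⟨h1, h2⟩ | ⟨h1, h2⟩)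
    · exact T'.loopless.irrefl _ h
    · exact hm (h2.symm.trans h1)
    · exact hm (h1.symm.trans h2)

lemma addLeaf_adj_left {V : Type} {ℓ m : V} (hm : m ≠ ℓ)
    (T' : SimpleGraph ↥({v | v ≠ ℓ} : Set V)) (y : V) :
    (addLeaf ℓ m hm T').Adj ℓ y ↔ y = m := by
  constructor
  · rintro (⟨hu, hv, h⟩ | ⟨h1, h2⟩ | ⟨h1, h2⟩)
    · exact absurd rfl hu
    · exact h2
    · exact absurd h1.symm hm
  · rintro rfl
    exact Or.inr (Or.inl ⟨rfl, rfl⟩)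

lemma addLeaf_adj_of_ne {V : Type} {ℓ m : V} (hm : m ≠ ℓ)
    (T' : SimpleGraph ↥({v | v ≠ ℓ} : Set V)) {u v : V} (hu : u ≠ ℓ) (hv : v ≠ ℓ) :
    (addLeaf ℓ m hm T').Adj u v ↔ T'.Adj ⟨u, hu⟩ ⟨v, hv⟩ := by
  constructor
  · rintro (⟨hu', hv', h⟩ | ⟨h1, h2⟩ | ⟨h1, h2⟩)
    · exact h
    · exact absurd h1 hu
    · exact absurd h2 hv
  · intro h
    exact Or.inl ⟨hu, hv, h⟩

lemma addLeaf_induce {V : Type} {ℓ m : V} (hm : m ≠ ℓ)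
    (T' : SimpleGraph ↥({v | v ≠ ℓ} : Set V)) :
    (addLeaf ℓ m hm T').induce {v | v ≠ ℓ} = T' := by
  ext x y
  show (addLeaf ℓ m hm T').Adj ↑x ↑y ↔ T'.Adj x y
  rw [addLeaf_adj_of_ne hm T' x.2 y.2]

lemma step_bij {V : Type} [Fintype V] [DecidableEq V] (d : V → ℕ) (ℓ m i j : V)
    (hiℓ : i ≠ ℓ) (hjℓ : j ≠ ℓ) (hmℓ : m ≠ ℓ) (hdℓ : d ℓ = 1) (hdm : 1 ≤ d m) :
    {T : SimpleGraph V | T.IsTree ∧ (∀ v, {u | T.Adj v u}.ncard = d v) ∧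
        T.Adj i j ∧ T.Adj ℓ m}.ncard
    = {T' : SimpleGraph ↥({v | v ≠ ℓ} : Set V) | T'.IsTree ∧
        (∀ x : ↥({v | v ≠ ℓ} : Set V),
          {u | T'.Adj x u}.ncard = (if (x : V) = m then d m - 1 else d x)) ∧
        T'.Adj ⟨i, hiℓ⟩ ⟨j, hjℓ⟩}.ncard := by
  classical
  set s : Set V := {v | v ≠ ℓ} with hsdef
  set S : Set (SimpleGraph V) :=
    {T | T.IsTree ∧ (∀ v, {u | T.Adj v u}.ncard = d v) ∧ T.Adj i j ∧ T.Adj ℓ m} with hSdef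
  have huniq : ∀ T : SimpleGraph V, (∀ v, {u | T.Adj v u}.ncard = d v) → T.Adj ℓ m →
      ∀ y, T.Adj ℓ y → y = m := fun T hreal hadj =>
    unique_nbr_of_singleton (nbhd_eq_singleton (by rw [hreal ℓ, hdℓ]) hadj)
  have hvalinj : Function.Injective (Subtype.val : ↥s → V) := Subtype.val_injective
  have himage_nbhd : ∀ (T : SimpleGraph V) (x : ↥s),
      Subtype.val '' {u : ↥s | (T.induce s).Adj x u} = {u : V | T.Adj ↑x u} \ {ℓ} := by
    intro T x
    ext u
    constructor
    · rintro ⟨⟨u', hu'⟩, hadj, rfl⟩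
      exact ⟨hadj, hu'⟩
    · rintro ⟨hadj, huℓ⟩
      exact ⟨⟨u, huℓ⟩, hadj, rfl⟩
  have hinj : Set.InjOn (fun T => T.induce s) S := by
    rintro T₁ ⟨-, hreal₁, -, hadj₁⟩ T₂ ⟨-, hreal₂, -, hadj₂⟩ hF
    ext u v
    by_cases hu : u = ℓ
    · subst hu
      constructor
      · intro h; rw [huniq T₁ hreal₁ hadj₁ v h]; exact hadj₂
      · intro h; rw [huniq T₂ hreal₂ hadj₂ v h]; exact hadj₁
    · by_cases hv : v = ℓ
      · subst hv
        rw [SimpleGraph.adj_comm, SimpleGraph.adj_comm T₂]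
        constructor
        · intro h; rw [huniq T₁ hreal₁ hadj₁ u h]; exact hadj₂
        · intro h; rw [huniq T₂ hreal₂ hadj₂ u h]; exact hadj₁
      · have h2 := congrArg (fun (G : SimpleGraph ↥s) => G.Adj ⟨u, hu⟩ ⟨v, hv⟩) hF
        exact iff_of_eq h2
  have himg : (fun T => T.induce s) '' S =
      {T' : SimpleGraph ↥s | T'.IsTree ∧
        (∀ x : ↥s, {u | T'.Adj x u}.ncard = (if (x : V) = m then d m - 1 else d x)) ∧
        T'.Adj ⟨i, hiℓ⟩ ⟨j, hjℓ⟩} := by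
    apply Set.Subset.antisymm
    · rintro _ ⟨T, ⟨htree, hreal, hij, hlm⟩, rfl⟩
      have hun := huniq T hreal hlm
      refine ⟨⟨induce_connected_of_unique_nbr htree.isConnected hun hmℓ, ?_⟩, ?_, hij⟩
      · intro v c hc
        exact htree.IsAcyclic (c.map (SimpleGraph.Embedding.induce s).toHom)
          (hc.map hvalinj)
      · intro x
        have hcn : {u : ↥s | (T.induce s).Adj x u}.ncard
            = ({u : V | T.Adj ↑x u} \ {ℓ}).ncard := by
          rw [← himage_nbhd T x, Set.ncard_image_of_injOn hvalinj.injOn]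
        rw [hcn]
        by_cases hx : (x : V) = m
        · rw [if_pos hx]
          have hmem : ℓ ∈ {u : V | T.Adj ↑x u} := by
            show T.Adj ↑x ℓ; rw [hx]; exact hlm.symm
          rw [Set.ncard_diff_singleton_of_mem hmem, hreal ↑x, hx]
        · rw [if_neg hx]
          have hmem : ℓ ∉ {u : V | T.Adj ↑x u} := by
            intro hh; exact hx (hun ↑x (SimpleGraph.Adj.symm hh))
          rw [Set.diff_singleton_eq_self hmem, hreal ↑x]
    · rintro T' ⟨htree', hreal', hij'⟩
      refine ⟨addLeaf ℓ m hmℓ T', ⟨?_, ?_, ?_, ?_⟩, addLeaf_induce hmℓ T'⟩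
      · -- IsTree
        set T := addLeaf ℓ m hmℓ T' with hTdef
        have hunT : ∀ y, T.Adj ℓ y → y = m := fun y hy => (addLeaf_adj_left hmℓ T' y).1 hy
        constructor
        · rw [SimpleGraph.connected_iff_exists_forall_reachable]
          refine ⟨m, fun w => ?_⟩
          by_cases hw : w = ℓ
          · rw [hw]
            exact SimpleGraph.Adj.reachable (Or.inr (Or.inr ⟨rfl, rfl⟩))
          · have hr := htree'.isConnected.preconnected ⟨m, hmℓ⟩ ⟨w, hw⟩
            exact SimpleGraph.Reachable.map
              (⟨Subtype.val, fun {a b} h => Or.inl ⟨a.2, b.2, h⟩⟩ : T' →g T) hr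
        · intro v c hc
          have hns : ℓ ∉ c.support := cycle_avoids_unique_nbr hunT hc
          have hv : v ∈ s := fun hh => hns (hh ▸ c.start_mem_support)
          obtain ⟨q, hqmap⟩ := exists_walk_induce c hv hv
            (fun x hx hxeq => hns (hxeq ▸ hx))
          have hq : q.IsCycle := by
            rw [← SimpleGraph.Walk.map_isCycle_iff_of_injective
              (f := (SimpleGraph.Embedding.induce s).toHom) hvalinj, hqmap]
            exact hc
          have hacy : (T.induce s).IsAcyclic := by
            rw [hTdef, addLeaf_induce hmℓ T']; exact htree'.IsAcyclic
          exact hacy q hq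
      · -- realizes
        intro v
        set T := addLeaf ℓ m hmℓ T' with hTdef
        by_cases hvℓ : v = ℓ
        · subst hvℓ
          have : {u | T.Adj v u} = {m} := by
            ext u; exact (addLeaf_adj_left hmℓ T' u)
          rw [this, Set.ncard_singleton, hdℓ]
        · have himg2 : Subtype.val '' {u : ↥s | T'.Adj ⟨v, hvℓ⟩ u}
              = {u : V | T.Adj v u ∧ u ≠ ℓ} := by
            ext u
            constructor
            · rintro ⟨⟨u', hu'⟩, hadj, rfl⟩
              exact ⟨(addLeaf_adj_of_ne hmℓ T' hvℓ hu').2 hadj, hu'⟩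
            · rintro ⟨hadj, huℓ⟩
              exact ⟨⟨u, huℓ⟩, (addLeaf_adj_of_ne hmℓ T' hvℓ huℓ).1 hadj, rfl⟩
          by_cases hvm : v = m
          · subst hvm
            have hins : {u | T.Adj v u} = insert ℓ {u : V | T.Adj v u ∧ u ≠ ℓ} := by
              ext u
              simp only [Set.mem_insert_iff, Set.mem_setOf_eq]
              constructor
              · intro h
                by_cases huℓ : u = ℓ
                · exact Or.inl huℓ
                · exact Or.inr ⟨h, huℓ⟩
              · rintro (rfl | ⟨h, -⟩)
                · exact Or.inr (Or.inr ⟨rfl, rfl⟩)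
                · exact h
            rw [hins, Set.ncard_insert_of_notMem (by simp), ← himg2,
              Set.ncard_image_of_injOn hvalinj.injOn, hreal' ⟨v, hvℓ⟩, if_pos rfl]
            exact Nat.sub_add_cancel hdm
          · have heq : {u | T.Adj v u} = {u : V | T.Adj v u ∧ u ≠ ℓ} := by
              ext u
              simp only [Set.mem_setOf_eq]
              constructor
              · intro h
                refine ⟨h, ?_⟩
                rintro rfl
                exact hvm ((addLeaf_adj_left hmℓ T' v).1 h.symm)
              · exact fun h => h.1
            rw [heq, ← himg2, Set.ncard_image_of_injOn hvalinj.injOn,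
              hreal' ⟨v, hvℓ⟩, if_neg hvm]
      · exact Or.inl ⟨hiℓ, hjℓ, hij'⟩
      · exact Or.inr (Or.inl ⟨rfl, rfl⟩)
  rw [← himg, Set.ncard_image_of_injOn hinj]

lemma no_conn_pair {V : Type} {G : SimpleGraph V} (hconn : G.Connected) {x y w : V}
    (hx : {u | G.Adj x u} = {y}) (hy : {u | G.Adj y u} = {x})
    (hw : w ≠ x) (hw2 : w ≠ y) : False := by
  have hA : ∀ a ∈ ({x, y} : Set V), ∀ b, G.Adj a b → b ∈ ({x, y} : Set V) := by
    rintro a (rfl | rfl) b hadj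
    · have : b ∈ {u | G.Adj a u} := hadj
      rw [hx, Set.mem_singleton_iff] at this
      exact Or.inr this
    · have : b ∈ {u | G.Adj a u} := hadj
      rw [hy, Set.mem_singleton_iff] at this
      exact Or.inl this
  have := reachable_mem_closed hA (hconn.preconnected x w) (Or.inl rfl)
  rcases this with h | h
  · exact hw h
  · exact hw2 h

lemma ncard_sum_fibers {V : Type} [Fintype V] [DecidableEq V]
    (S : Set (SimpleGraph V)) (ℓ : V)
    (hS : ∀ T ∈ S, {u | T.Adj ℓ u}.ncard = 1) :
    S.ncard = ∑ m ∈ Finset.univ.erase ℓ, {T | T ∈ S ∧ T.Adj ℓ m}.ncard := by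
  classical
  have hSf : S.Finite := Set.toFinite S
  set g : SimpleGraph V → V := fun T =>
    if h : ∃ a, {u | T.Adj ℓ u} = {a} then h.choose else ℓ with hgdef
  have hg : ∀ T ∈ S, {u | T.Adj ℓ u} = {g T} := by
    intro T hT
    have h1 := Set.ncard_eq_one.1 (hS T hT)
    rw [hgdef]
    simp only [dif_pos h1]
    exact h1.choose_spec
  have hgadj : ∀ T ∈ S, T.Adj ℓ (g T) := by
    intro T hT
    have : g T ∈ {u | T.Adj ℓ u} := by rw [hg T hT]; rfl
    exact this
  rw [Set.ncard_eq_toFinset_card S hSf]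
  rw [Finset.card_eq_sum_card_fiberwise (f := g) (t := Finset.univ.erase ℓ)
    (fun T hT => by
      rw [Finset.mem_coe, Finset.mem_erase]
      refine ⟨?_, Finset.mem_univ _⟩
      intro hh
      have := hgadj T (hSf.mem_toFinset.1 hT)
      rw [hh] at this
      exact this.ne rfl)]
  apply Finset.sum_congr rfl
  intro m _
  have hfin2 : {T | T ∈ S ∧ T.Adj ℓ m}.Finite := Set.toFinite _
  rw [Set.ncard_eq_toFinset_card _ hfin2]
  congr 1
  ext T
  simp only [Finset.mem_filter, Set.Finite.mem_toFinset, Set.mem_setOf_eq]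
  constructor
  · rintro ⟨hT, hgT⟩
    exact ⟨hT, hgT ▸ hgadj T hT⟩
  · rintro ⟨hT, hadj⟩
    refine ⟨hT, ?_⟩
    have : m ∈ {u | T.Adj ℓ u} := hadj
    rw [hg T hT, Set.mem_singleton_iff] at this
    exact this.symm

/-- The star with center `a` (on three vertices this is a path). -/
def star3 {V : Type} [DecidableEq V] (a : V) : SimpleGraph V where
  Adj u v := u ≠ v ∧ (u = a ∨ v = a)
  symm := by
    constructor
    rintro u v ⟨h1, h2 | h2⟩
    · exact ⟨h1.symm, Or.inr h2⟩
    · exact ⟨h1.symm, Or.inl h2⟩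
  loopless := by constructor; rintro v ⟨h1, -⟩; exact h1 rfl

lemma all_one_of_sum_eq_card {V : Type} [Fintype V] [DecidableEq V] (t : Finset V)
    (f : V → ℕ) (h1 : ∀ v ∈ t, 1 ≤ f v) (hsum : ∑ v ∈ t, f v = t.card) :
    ∀ v ∈ t, f v = 1 := by
  by_contra hc
  push_neg at hc
  obtain ⟨v, hv, hne⟩ := hc
  have hlt : ∑ x ∈ t, (1 : ℕ) < ∑ x ∈ t, f x :=
    Finset.sum_lt_sum h1 ⟨v, hv, lt_of_le_of_ne (h1 v hv) (Ne.symm hne)⟩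
  rw [Finset.sum_const, smul_eq_mul, mul_one, hsum] at hlt
  exact lt_irrefl _ hlt

lemma base3 {V : Type} [Fintype V] [DecidableEq V] (hcard : Fintype.card V = 3)
    (d : V → ℕ) (hd1 : ∀ v, 1 ≤ d v) (hsum : ∑ v, d v = 4)
    (a b : V) (hab : a ≠ b) (hda : d a = 2) :
    {T : SimpleGraph V | T.IsTree ∧ (∀ v, {u | T.Adj v u}.ncard = d v) ∧ T.Adj a b}.ncard
      = 1 := by
  classical
  -- every vertex other than `a` has degree 1
  have hd_one : ∀ v, v ≠ a → d v = 1 := by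
    have hsum' : ∑ v ∈ Finset.univ.erase a, d v = (Finset.univ.erase a).card := by
      have h2 := Finset.add_sum_erase Finset.univ d (Finset.mem_univ a)
      rw [Finset.card_erase_of_mem (Finset.mem_univ a), Finset.card_univ, hcard]
      omega
    intro v hv
    exact all_one_of_sum_eq_card _ d (fun w _ => hd1 w) hsum' v
      (Finset.mem_erase.2 ⟨hv, Finset.mem_univ v⟩)
  -- neighborhoods in the star
  have hstar_nbhd_a : {u | (star3 a).Adj a u} = {x | x ≠ a} := by
    ext u
    simp only [Set.mem_setOf_eq, star3]
    constructor
    · rintro ⟨h1, -⟩; exact fun hh => h1 hh.symm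
    · intro h; refine ⟨fun hh => h hh.symm, ?_⟩; simp
  have hstar_nbhd : ∀ v, v ≠ a → {u | (star3 a).Adj v u} = {a} := by
    intro v hv
    ext u
    simp only [Set.mem_setOf_eq, Set.mem_singleton_iff, star3]
    constructor
    · rintro ⟨h1, h2 | h2⟩
      · exact absurd h2 hv
      · exact h2
    · rintro rfl
      refine ⟨hv, ?_⟩; simp
  have hncard_ne : ({x | x ≠ a} : Set V).ncard = 2 := by
    have h1 : ({x | x ≠ a} : Set V) = ({a} : Set V)ᶜ := by ext x; simp
    have h2 := Set.ncard_add_ncard_compl ({a} : Set V)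
    rw [Set.ncard_singleton, Nat.card_eq_fintype_card, hcard] at h2
    rw [h1]
    omega
  -- the star is in the set
  have hstar_mem : star3 a ∈
      {T : SimpleGraph V | T.IsTree ∧ (∀ v, {u | T.Adj v u}.ncard = d v) ∧ T.Adj a b} := by
    refine ⟨⟨?_, ?_⟩, ?_, ?_⟩
    · rw [SimpleGraph.connected_iff_exists_forall_reachable]
      refine ⟨a, fun w => ?_⟩
      by_cases hw : w = a
      · rw [hw]
      · exact SimpleGraph.Adj.reachable
          (show a ≠ w ∧ (a = a ∨ w = a) from ⟨fun hh => hw hh.symm, Or.inl rfl⟩)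
    · intro v c hc
      have havoid : ∀ x, x ≠ a → x ∉ c.support := by
        intro x hx
        refine cycle_avoids_unique_nbr (m := a) (fun y hy => ?_) hc
        rcases hy with ⟨-, h | h⟩
        · exact absurd h hx
        · exact h
      have hall : ∀ x ∈ c.support, x = a := by
        intro x hx
        by_contra hxa
        exact havoid x hxa hx
      have hlen := hc.three_le_length
      have hlsup := c.length_support
      have hnodup := hc.support_nodup
      have hlt : 3 ≤ c.support.tail.length := by
        rw [List.length_tail, hlsup]
        omega
      rcases hlist : c.support.tail with _ | ⟨x, _ | ⟨y, t''⟩⟩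
      · rw [hlist] at hlt
        simp at hlt
      · rw [hlist] at hlt
        simp at hlt
      · rw [hlist] at hnodup
        have hx : x = a := hall x (List.mem_of_mem_tail (by rw [hlist]; exact List.mem_cons_self))
        have hy : y = a := hall y (List.mem_of_mem_tail (by rw [hlist]; exact List.mem_cons_of_mem _ (List.mem_cons_self)))
        rw [List.nodup_cons] at hnodup
        exact hnodup.1 (by rw [hx, hy]; exact List.mem_cons_self)
    · intro v
      by_cases hv : v = a
      · rw [hv, hstar_nbhd_a, hncard_ne, hda]
      · rw [hstar_nbhd v hv, Set.ncard_singleton, hd_one v hv]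
    · exact ⟨hab, Or.inl rfl⟩
  -- uniqueness
  have huniq : ∀ T ∈ {T : SimpleGraph V | T.IsTree ∧ (∀ v, {u | T.Adj v u}.ncard = d v)
      ∧ T.Adj a b}, T = star3 a := by
    rintro T ⟨-, hreal, -⟩
    have hnba : {u | T.Adj a u} = {x | x ≠ a} := by
      apply Set.eq_of_subset_of_ncard_le ?_ ?_ (Set.toFinite _)
      · intro u hu
        exact fun hh => T.loopless.irrefl a (hh ▸ hu)
      · rw [hncard_ne, hreal a, hda]
    have hnbv : ∀ v, v ≠ a → {u | T.Adj v u} = {a} := by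
      intro v hv
      apply nbhd_eq_singleton
      · rw [hreal v, hd_one v hv]
      · have : v ∈ {x : V | x ≠ a} := hv
        rw [← hnba] at this
        exact this.symm
    ext u v
    show T.Adj u v ↔ (star3 a).Adj u v
    by_cases hu : u = a
    · rw [hu]
      constructor
      · intro h
        exact ⟨h.ne, Or.inl rfl⟩
      · rintro ⟨h1, -⟩
        have hmm : v ∈ {x : V | x ≠ a} := fun hh => h1 hh.symm
        rw [← hnba] at hmm
        exact hmm
    · by_cases hv : v = a
      · rw [hv]
        constructor
        · intro h
          exact ⟨h.ne, Or.inr rfl⟩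
        · rintro ⟨h1, -⟩
          have hmm : u ∈ {x : V | x ≠ a} := hu
          rw [← hnba] at hmm
          exact hmm.symm
      · constructor
        · intro h
          have hmem : v ∈ {x | T.Adj u x} := h
          rw [hnbv u hu, Set.mem_singleton_iff] at hmem
          exact absurd hmem hv
        · rintro ⟨-, h | h⟩
          · exact absurd h hu
          · exact absurd h hv
  have hset : {T : SimpleGraph V | T.IsTree ∧ (∀ v, {u | T.Adj v u}.ncard = d v)
      ∧ T.Adj a b} = {star3 a} :=
    Set.eq_singleton_iff_unique_mem.2 ⟨hstar_mem, huniq⟩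
  rw [hset, Set.ncard_singleton]

lemma card_le_sum' {V : Type} (t : Finset V) (f : V → ℕ) (h : ∀ x ∈ t, 1 ≤ f x) :
    t.card ≤ ∑ x ∈ t, f x := by
  simpa using Finset.card_nsmul_le_sum t f 1 h

theorem aux_count (N : ℕ) : ∀ (V : Type) [Fintype V] [DecidableEq V],
    Fintype.card V = N → 3 ≤ N → ∀ (d : V → ℕ), (∀ v, 1 ≤ d v) →
    (∑ v, d v) = 2 * N - 2 → ∀ i j : V, i ≠ j →
    {T : SimpleGraph V | T.IsTree ∧ (∀ v, {u | T.Adj v u}.ncard = d v) ∧ T.Adj i j}.ncard *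
      ∏ k, Nat.factorial (d k - 1) = (d i + d j - 2) * Nat.factorial (N - 3) := by
  induction N using Nat.strong_induction_on with
  | _ N IH =>
  intro V _ _ hcard hN3 d hd1 hdsum i j hij
  classical
  by_cases hca : ∀ m, m ≠ i → m ≠ j → 2 ≤ d m
  · -- all other vertices have degree ≥ 2 : count is 0 on both sides
    have hBcard : ((Finset.univ.erase i).erase j).card = N - 2 := by
      rw [Finset.card_erase_of_mem
        (Finset.mem_erase.2 ⟨hij.symm, Finset.mem_univ j⟩),
        Finset.card_erase_of_mem (Finset.mem_univ i), Finset.card_univ, hcard]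
      omega
    have hBsum : 2 * (N - 2) ≤ ∑ v ∈ (Finset.univ.erase i).erase j, d v := by
      calc 2 * (N - 2) = ((Finset.univ.erase i).erase j).card • 2 := by
            rw [hBcard, smul_eq_mul, mul_comm]
        _ ≤ ∑ v ∈ (Finset.univ.erase i).erase j, d v :=
            Finset.card_nsmul_le_sum _ _ _ (fun x hx => by
              rw [Finset.mem_erase, Finset.mem_erase] at hx
              exact hca x hx.2.1 hx.1)
    have hsum_split : d i + (d j + ∑ v ∈ (Finset.univ.erase i).erase j, d v) = 2 * N - 2 := by
      rw [Finset.add_sum_erase _ d (Finset.mem_erase.2 ⟨hij.symm, Finset.mem_univ j⟩),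
        Finset.add_sum_erase _ d (Finset.mem_univ i), hdsum]
    have key : d i = 1 ∧ d j = 1 := by
      have h1 := hd1 i
      have h2 := hd1 j
      omega
    have hempty : {T : SimpleGraph V | T.IsTree ∧ (∀ v, {u | T.Adj v u}.ncard = d v)
        ∧ T.Adj i j} = ∅ := by
      rw [Set.eq_empty_iff_forall_notMem]
      rintro T ⟨htree, hreal, hadj⟩
      have hx : {u | T.Adj i u} = {j} :=
        nbhd_eq_singleton (by rw [hreal i, key.1]) hadj
      have hy : {u | T.Adj j u} = {i} :=
        nbhd_eq_singleton (by rw [hreal j, key.2]) hadj.symm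
      have hw : ∃ w, w ≠ i ∧ w ≠ j := by
        have hne : ((Finset.univ.erase i).erase j).Nonempty := by
          rw [← Finset.card_pos, hBcard]; omega
        obtain ⟨w, hw⟩ := hne
        rw [Finset.mem_erase, Finset.mem_erase] at hw
        exact ⟨w, hw.2.1, hw.1⟩
      obtain ⟨w, hwi, hwj⟩ := hw
      exact no_conn_pair htree.isConnected hx hy hwi hwj
    rw [hempty, Set.ncard_empty, key.1, key.2]
    simp
  · push_neg at hca
    obtain ⟨ℓ, hℓi, hℓj, hdℓ'⟩ := hca
    have hdℓ : d ℓ = 1 := le_antisymm (by omega) (hd1 ℓ)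
    have hiℓ : i ≠ ℓ := fun h => hℓi h.symm
    have hjℓ : j ≠ ℓ := fun h => hℓj h.symm
    -- d i + d j ≤ N and basic sums
    have hsum_split : d ℓ + (d i + (d j +
        ∑ v ∈ ((Finset.univ.erase ℓ).erase i).erase j, d v)) = 2 * N - 2 := by
      rw [Finset.add_sum_erase _ d (Finset.mem_erase.2 ⟨hij.symm,
          Finset.mem_erase.2 ⟨hjℓ, Finset.mem_univ j⟩⟩),
        Finset.add_sum_erase _ d (Finset.mem_erase.2 ⟨hiℓ, Finset.mem_univ i⟩),
        Finset.add_sum_erase _ d (Finset.mem_univ ℓ), hdsum]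
    have hBcard : (((Finset.univ.erase ℓ).erase i).erase j).card = N - 3 := by
      rw [Finset.card_erase_of_mem (Finset.mem_erase.2 ⟨hij.symm,
          Finset.mem_erase.2 ⟨hjℓ, Finset.mem_univ j⟩⟩),
        Finset.card_erase_of_mem (Finset.mem_erase.2 ⟨hiℓ, Finset.mem_univ i⟩),
        Finset.card_erase_of_mem (Finset.mem_univ ℓ), Finset.card_univ, hcard]
      omega
    have hBge : (((Finset.univ.erase ℓ).erase i).erase j).card
        ≤ ∑ v ∈ ((Finset.univ.erase ℓ).erase i).erase j, d v :=
      card_le_sum' _ _ (fun x _ => hd1 x)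
    have hijN : d i + d j ≤ N := by omega
    by_cases hNeq : N = 3
    · -- base case
      subst hNeq
      have hsum4 : ∑ v, d v = 4 := by rw [hdsum]
      have hd2' : ∀ k : V, d k ≤ 2 := by
        intro k
        have h1 : d k + ∑ v ∈ Finset.univ.erase k, d v = 4 := by
          rw [Finset.add_sum_erase _ d (Finset.mem_univ k), hsum4]
        have h2 : (Finset.univ.erase k).card ≤ ∑ v ∈ Finset.univ.erase k, d v :=
          card_le_sum' _ _ (fun x _ => hd1 x)
        rw [Finset.card_erase_of_mem (Finset.mem_univ k), Finset.card_univ, hcard] at h2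
        omega
      have hprod : ∏ k, Nat.factorial (d k - 1) = 1 := by
        apply Finset.prod_eq_one
        intro k _
        have h1 := hd1 k
        have h2 := hd2' k
        have : d k - 1 = 0 ∨ d k - 1 = 1 := by omega
        rcases this with h | h <;> rw [h] <;> rfl
      have hij3 : d i + d j = 3 := by
        have hBempty : ((Finset.univ.erase ℓ).erase i).erase j = ∅ :=
          Finset.card_eq_zero.1 (by rw [hBcard])
        rw [hBempty, Finset.sum_empty] at hsum_split
        omega
      rw [hprod, mul_one]
      have hcases : d i = 2 ∧ d j = 1 ∨ d i = 1 ∧ d j = 2 := by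
        have := hd1 i; have := hd1 j; omega
      rcases hcases with ⟨h1, h2⟩ | ⟨h1, h2⟩
      · rw [base3 hcard d hd1 hsum4 i j hij h1, h1, h2]
        rfl
      · have hsymm : {T : SimpleGraph V | T.IsTree ∧ (∀ v, {u | T.Adj v u}.ncard = d v)
            ∧ T.Adj i j} = {T : SimpleGraph V | T.IsTree ∧
            (∀ v, {u | T.Adj v u}.ncard = d v) ∧ T.Adj j i} := by
          ext T
          simp only [Set.mem_setOf_eq]
          rw [SimpleGraph.adj_comm]
        rw [hsymm, base3 hcard d hd1 hsum4 j i hij.symm h2, h1, h2]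
        rfl
    · have hN4 : 4 ≤ N := by omega
      -- MAIN INDUCTIVE STEP
      set s : Set V := {v | v ≠ ℓ} with hsdef
      set S : Set (SimpleGraph V) :=
        {T | T.IsTree ∧ (∀ v, {u | T.Adj v u}.ncard = d v) ∧ T.Adj i j} with hSdef
      have hSnb : ∀ T ∈ S, {u | T.Adj ℓ u}.ncard = 1 := by
        rintro T ⟨-, hreal, -⟩
        rw [hreal ℓ, hdℓ]
      have hsplit := ncard_sum_fibers S ℓ hSnb
      have hcard' : Fintype.card ↥({v | v ≠ ℓ} : Set V) = N - 1 := by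
        have htf : ({v | v ≠ ℓ} : Set V).toFinset = Finset.univ.erase ℓ := by
          ext x
          simp [Set.mem_toFinset]
        rw [← Set.toFinset_card, htf, Finset.card_erase_of_mem (Finset.mem_univ ℓ),
          Finset.card_univ, hcard]
      have hsubprod : ∀ (f : V → ℕ),
          ∏ x : ↥({v | v ≠ ℓ} : Set V), f ↑x = ∏ v ∈ Finset.univ.erase ℓ, f v := by
        intro f
        exact (Finset.prod_subtype (p := fun v => v ∈ ({v | v ≠ ℓ} : Set V))
          (Finset.univ.erase ℓ) (fun x => by simp) f).symm
      have hsubsum : ∀ (f : V → ℕ),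
          ∑ x : ↥({v | v ≠ ℓ} : Set V), f ↑x = ∑ v ∈ Finset.univ.erase ℓ, f v := by
        intro f
        exact (Finset.sum_subtype (p := fun v => v ∈ ({v | v ≠ ℓ} : Set V))
          (Finset.univ.erase ℓ) (fun x => by simp) f).symm
      have hmain : ∀ m ∈ Finset.univ.erase ℓ,
          {T | T ∈ S ∧ T.Adj ℓ m}.ncard * ∏ k, Nat.factorial (d k - 1)
          = ((d m - 1) * ((if i = m then d i - 1 else d i) +
              (if j = m then d j - 1 else d j) - 2)) * Nat.factorial (N - 4) := by
        intro m hm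
        rw [Finset.mem_erase] at hm
        have hmℓ : m ≠ ℓ := hm.1
        by_cases hdm : 2 ≤ d m
        · -- the bijection case
          have hfib : {T | T ∈ S ∧ T.Adj ℓ m} =
              {T : SimpleGraph V | T.IsTree ∧ (∀ v, {u | T.Adj v u}.ncard = d v) ∧
                T.Adj i j ∧ T.Adj ℓ m} := by
            ext T
            rw [hSdef]
            simp only [Set.mem_setOf_eq]
            tauto
          rw [hfib, step_bij d ℓ m i j hiℓ hjℓ hmℓ hdℓ (by omega)]
          set d' : ↥({v | v ≠ ℓ} : Set V) → ℕ :=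
            fun x => if (x : V) = m then d m - 1 else d x with hd'def
          have hd'1 : ∀ x, 1 ≤ d' x := by
            intro x
            rw [hd'def]
            dsimp only
            split
            · omega
            · exact hd1 _
          have hmm : m ∈ Finset.univ.erase ℓ := Finset.mem_erase.2 ⟨hmℓ, Finset.mem_univ m⟩
          have e1 : d ℓ + ∑ v ∈ Finset.univ.erase ℓ, d v = 2 * N - 2 := by
            rw [Finset.add_sum_erase _ d (Finset.mem_univ ℓ), hdsum]
          have e2 : d m + ∑ v ∈ (Finset.univ.erase ℓ).erase m, d v
              = ∑ v ∈ Finset.univ.erase ℓ, d v := Finset.add_sum_erase _ d hmm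
          have hd'sum : ∑ x, d' x = 2 * (N - 1) - 2 := by
            have h1 : ∑ x : ↥({v | v ≠ ℓ} : Set V), d' x
                = ∑ v ∈ Finset.univ.erase ℓ, (if v = m then d m - 1 else d v) :=
              hsubsum (fun v => if v = m then d m - 1 else d v)
            have e3 : (if m = m then d m - 1 else d m) +
                ∑ v ∈ (Finset.univ.erase ℓ).erase m, (if v = m then d m - 1 else d v)
                = ∑ v ∈ Finset.univ.erase ℓ, (if v = m then d m - 1 else d v) :=
              Finset.add_sum_erase _ (fun v => if v = m then d m - 1 else d v) hmm
            rw [if_pos rfl] at e3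
            have e4 : ∑ v ∈ (Finset.univ.erase ℓ).erase m, (if v = m then d m - 1 else d v)
                = ∑ v ∈ (Finset.univ.erase ℓ).erase m, d v :=
              Finset.sum_congr rfl (fun x hx => if_neg (Finset.mem_erase.1 hx).1)
            rw [h1, ← e3, e4]
            omega
          have hij' : (⟨i, hiℓ⟩ : ↥({v | v ≠ ℓ} : Set V)) ≠ ⟨j, hjℓ⟩ :=
            fun h => hij (congrArg Subtype.val h)
          have hIH := IH (N - 1) (by omega) ↥({v | v ≠ ℓ} : Set V) hcard' (by omega)
            d' hd'1 hd'sum ⟨i, hiℓ⟩ ⟨j, hjℓ⟩ hij'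
          have hN13 : N - 1 - 3 = N - 4 := by omega
          rw [hN13] at hIH
          -- product relation
          have p5 : Nat.factorial (d m - 1) = (d m - 1) * Nat.factorial (d m - 1 - 1) := by
            obtain ⟨t, ht⟩ : ∃ t, d m = t + 2 := ⟨d m - 2, by omega⟩
            rw [ht]
            simp [Nat.factorial_succ]
          have hprodrel : ∏ k : V, Nat.factorial (d k - 1)
              = (d m - 1) * ∏ x : ↥({v | v ≠ ℓ} : Set V), Nat.factorial (d' x - 1) := by
            have p0 : ∏ k : V, Nat.factorial (d k - 1)
                = Nat.factorial (d ℓ - 1) * ∏ k ∈ Finset.univ.erase ℓ, Nat.factorial (d k - 1) :=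
              (Finset.mul_prod_erase _ _ (Finset.mem_univ ℓ)).symm
            have p1 : Nat.factorial (d ℓ - 1) = 1 := by rw [hdℓ]; rfl
            have p2 : ∏ k ∈ Finset.univ.erase ℓ, Nat.factorial (d k - 1)
                = Nat.factorial (d m - 1) *
                  ∏ k ∈ (Finset.univ.erase ℓ).erase m, Nat.factorial (d k - 1) :=
              (Finset.mul_prod_erase _ _ hmm).symm
            have p3 : ∏ x : ↥({v | v ≠ ℓ} : Set V), Nat.factorial (d' x - 1)
                = ∏ v ∈ Finset.univ.erase ℓ,
                    Nat.factorial ((if v = m then d m - 1 else d v) - 1) :=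
              hsubprod (fun v => Nat.factorial ((if v = m then d m - 1 else d v) - 1))
            have p4 : ∏ v ∈ Finset.univ.erase ℓ,
                  Nat.factorial ((if v = m then d m - 1 else d v) - 1)
                = Nat.factorial (d m - 1 - 1) *
                  ∏ k ∈ (Finset.univ.erase ℓ).erase m, Nat.factorial (d k - 1) := by
              rw [← Finset.mul_prod_erase _ _ hmm, if_pos rfl]
              congr 1
              exact Finset.prod_congr rfl (fun x hx => by
                rw [if_neg (Finset.mem_erase.1 hx).1])
            rw [p0, p1, one_mul, p2, p3, p4, p5]
            ring
          have hd'i : d' ⟨i, hiℓ⟩ = if i = m then d i - 1 else d i := by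
            rw [hd'def]
            dsimp only
            by_cases h : i = m
            · rw [if_pos h, if_pos h, h]
            · rw [if_neg h, if_neg h]
          have hd'j : d' ⟨j, hjℓ⟩ = if j = m then d j - 1 else d j := by
            rw [hd'def]
            dsimp only
            by_cases h : j = m
            · rw [if_pos h, if_pos h, h]
            · rw [if_neg h, if_neg h]
          rw [hd'i, hd'j] at hIH
          have hcomb : ∀ (X Y c e f : ℕ), X * Y = e * f → X * (c * Y) = c * e * f := by
            intro X Y c e f h
            calc X * (c * Y) = c * (X * Y) := by ring
              _ = c * (e * f) := by rw [h]
              _ = c * e * f := by ring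
          rw [hprodrel]
          exact hcomb _ _ _ _ _ hIH
        · -- degree–1 neighbor: empty fiber
          have hdm1 : d m = 1 := le_antisymm (by omega) (hd1 m)
          have hempty : {T | T ∈ S ∧ T.Adj ℓ m} = ∅ := by
            rw [Set.eq_empty_iff_forall_notMem]
            rintro T ⟨hTS, hadjℓ⟩
            rw [hSdef] at hTS
            obtain ⟨htree, hreal, hadj⟩ := hTS
            have hnℓ : {u | T.Adj ℓ u} = {m} :=
              nbhd_eq_singleton (by rw [hreal ℓ, hdℓ]) hadjℓ
            have hnm : {u | T.Adj m u} = {ℓ} :=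
              nbhd_eq_singleton (by rw [hreal m, hdm1]) hadjℓ.symm
            by_cases hmi : m = i
            · have : j = ℓ := unique_nbr_of_singleton hnm j (hmi ▸ hadj)
              exact hjℓ this
            · by_cases hmj : m = j
              · have : i = ℓ := unique_nbr_of_singleton hnm i (hmj ▸ hadj.symm)
                exact hiℓ this
              · exact no_conn_pair htree.isConnected hnℓ hnm hiℓ
                  (fun h => hmi h.symm)
          rw [hempty, Set.ncard_empty, hdm1]
          simp
      rw [hsplit, Finset.sum_mul, Finset.sum_congr rfl hmain, ← Finset.sum_mul]
      -- final algebra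
      have hi_mem : i ∈ Finset.univ.erase ℓ := Finset.mem_erase.2 ⟨hiℓ, Finset.mem_univ i⟩
      have hj_mem : j ∈ (Finset.univ.erase ℓ).erase i :=
        Finset.mem_erase.2 ⟨hij.symm, Finset.mem_erase.2 ⟨hjℓ, Finset.mem_univ j⟩⟩
      have key : ∑ m ∈ Finset.univ.erase ℓ, (d m - 1) *
          ((if i = m then d i - 1 else d i) + (if j = m then d j - 1 else d j) - 2)
          = (d i + d j - 2) * (N - 3) := by
        rw [← Finset.add_sum_erase _ _ hi_mem, ← Finset.add_sum_erase _ _ hj_mem]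
        rw [if_pos rfl, if_neg (fun h => hij h.symm), if_pos rfl, if_neg hij]
        have hB : ∀ x ∈ ((Finset.univ.erase ℓ).erase i).erase j,
            (d x - 1) * ((if i = x then d i - 1 else d i) +
              (if j = x then d j - 1 else d j) - 2)
            = (d x - 1) * (d i + d j - 2) := by
          intro x hx
          rw [Finset.mem_erase, Finset.mem_erase] at hx
          rw [if_neg (fun h => hx.2.1 h.symm), if_neg (fun h => hx.1 h.symm)]
        rw [Finset.sum_congr rfl hB, ← Finset.sum_mul]
        have hB1 : (∑ x ∈ ((Finset.univ.erase ℓ).erase i).erase j, (d x - 1))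
            + (((Finset.univ.erase ℓ).erase i).erase j).card
            = ∑ x ∈ ((Finset.univ.erase ℓ).erase i).erase j, d x := by
          rw [Finset.card_eq_sum_ones, ← Finset.sum_add_distrib]
          exact Finset.sum_congr rfl (fun x _ => by have := hd1 x; omega)
        have hSB : ∑ x ∈ ((Finset.univ.erase ℓ).erase i).erase j, (d x - 1)
            = N - d i - d j := by omega
        rw [hSB]
        have ha := hd1 i
        have hb := hd1 j
        by_cases h3 : 3 ≤ d i + d j
        · zify [ha, hb, (by omega : 2 ≤ d i - 1 + d j), (by omega : 2 ≤ d i + (d j - 1)),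
            (by omega : 2 ≤ d i + d j), (by omega : d i ≤ N), (by omega : d j ≤ N - d i),
            (by omega : 3 ≤ N), (by omega : 1 ≤ d i), (by omega : 1 ≤ d j)]
          ring
        · have hab1 : d i = 1 ∧ d j = 1 := by omega
          rw [hab1.1, hab1.2]
          simp
      rw [key]
      have hfact : (N - 3) * Nat.factorial (N - 4) = Nat.factorial (N - 3) := by
        have h43 : N - 3 = (N - 4) + 1 := by omega
        rw [h43, Nat.factorial_succ]
      rw [mul_assoc, hfact]



theorem tree_count_with_fixed_edge (n : ℕ) (hn : 3 ≤ n) (d : Fin n → ℕ)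
    (hd : isTreeSeq d) (i j : Fin n) (hij : i ≠ j) :
    {T : SimpleGraph (Fin n) | T.IsTree ∧ realizes T d ∧ T.Adj i j}.ncard *
        ∏ k, Nat.factorial (d k - 1) =
      (d i + d j - 2) * Nat.factorial (n - 3) := by
  have h := aux_count n (Fin n) (Fintype.card_fin n) hn d hd.1 hd.2 i j hij
  exact h
end

section
/- Let (d_1,...,d_n) be a tree degree sequence with n ≥ 3 and i ≠ j. If T is a uniformly random labeled tree with this degree sequence, then the probability that v_i and v_j are adjacent in T equals (d_i + d_j − 2)/(n − 2). -/
namespace TreeCount0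

open SimpleGraph Function

variable {n : ℕ}

def TreeOn (s : Finset (Fin n)) (G : SimpleGraph (Fin n)) : Prop :=
  G.IsAcyclic ∧ (∀ v ∈ s, ∀ w ∈ s, G.Reachable v w) ∧ (∀ v w : Fin n, G.Adj v w → v ∈ s)

lemma TreeOn.mem_right {s : Finset (Fin n)} {G : SimpleGraph (Fin n)} (h : TreeOn s G)
    {v w : Fin n} (hvw : G.Adj v w) : w ∈ s := h.2.2 w v hvw.symm

/-- first edge of a walk between distinct vertices -/
lemma exists_first_edge {G : SimpleGraph (Fin n)} {a b : Fin n} (p : G.Walk a b) (hab : a ≠ b) :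
    ∃ x, G.Adj a x ∧ s(a, x) ∈ p.edges := by
  cases p with
  | nil => exact absurd rfl hab
  | cons h q => exact ⟨_, h, by simp⟩

/-- last edge of a walk between distinct vertices -/
lemma exists_last_edge {G : SimpleGraph (Fin n)} {a b : Fin n} (p : G.Walk a b) (hab : a ≠ b) :
    ∃ x, G.Adj b x ∧ s(b, x) ∈ p.edges := by
  obtain ⟨x, hx, he⟩ := exists_first_edge p.reverse (Ne.symm hab)
  exact ⟨x, hx, by simpa [SimpleGraph.Walk.edges_reverse] using he⟩

/-- A degree-one vertex is not an interior vertex of a path. -/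
lemma leaf_not_mem_path {G : SimpleGraph (Fin n)} {k u v w : Fin n}
    (hk : {x | G.Adj k x} = {u}) {p : G.Walk v w} (hp : p.IsPath)
    (hv : v ≠ k) (hw : w ≠ k) : k ∉ p.support := by
  intro hmem
  have hspec := p.take_spec hmem
  set q := p.takeUntil k hmem with hq
  set r := p.dropUntil k hmem with hr
  obtain ⟨x, hx, hxe⟩ := exists_last_edge q hv
  obtain ⟨y, hy, hye⟩ := exists_first_edge r hw.symm
  have hxu : x = u := by have : x ∈ ({u} : Set (Fin n)) := hk ▸ hx; simpa using this
  have hyu : y = u := by have : y ∈ ({u} : Set (Fin n)) := hk ▸ hy; simpa using this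
  have hedges : p.edges = q.edges ++ r.edges := by
    rw [← hspec, SimpleGraph.Walk.edges_append]
  have hnd := hp.isTrail.edges_nodup
  rw [hedges] at hnd
  have hdisj := List.disjoint_of_nodup_append hnd
  exact hdisj (hxu ▸ hxe) (hyu ▸ hye)

/-- No cycle passes through a vertex with at most one neighbour. -/
lemma no_cycle_at_leaf {G : SimpleGraph (Fin n)} {k u : Fin n}
    (hk : {x | G.Adj k x} ⊆ {u}) (c : G.Walk k k) : ¬ c.IsCycle := by
  intro hc
  cases c with
  | nil => simp at hc
  | @cons _ x _ h t =>
    have hxu : x = u := by have : x ∈ ({u} : Set (Fin n)) := hk h; simpa using this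
    have hxk : x ≠ k := (G.ne_of_adj h).symm
    obtain ⟨y, hy, hye⟩ := exists_last_edge t hxk
    have hyu : y = u := by have : y ∈ ({u} : Set (Fin n)) := hk hy; simpa using this
    subst hxu
    subst hyu
    have hnd := hc.isTrail.edges_nodup
    rw [SimpleGraph.Walk.edges_cons, List.nodup_cons] at hnd
    exact hnd.1 hye

lemma acyclic_anti {G H : SimpleGraph (Fin n)} (hle : G ≤ H) (h : H.IsAcyclic) :
    G.IsAcyclic := by
  intro v c hc
  have hsub : ∀ e ∈ c.edges, e ∈ H.edgeSet := fun e he =>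
    SimpleGraph.edgeSet_mono hle (c.edges_subset_edgeSet he)
  exact h (c.transfer H hsub) (hc.transfer hsub)

variable {s : Finset (Fin n)} {G G' : SimpleGraph (Fin n)} {k u : Fin n} {d : Fin n → ℕ}

lemma adj_of_nb_eq (hk : {x | G.Adj k x} = {u}) : G.Adj k u := by
  have : u ∈ {x | G.Adj k x} := by rw [hk]; rfl
  exact this

lemma treeOn_deleteEdges (hG : TreeOn s G) (hk : {x | G.Adj k x} = {u}) :
    TreeOn (s.erase k) (G.deleteEdges {s(k, u)}) := by
  refine ⟨acyclic_anti (G.deleteEdges_le _) hG.1, ?_, ?_⟩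
  · intro v hv w hw
    obtain ⟨p0⟩ := hG.2.1 v (Finset.mem_of_mem_erase hv) w (Finset.mem_of_mem_erase hw)
    obtain ⟨p, hp⟩ := p0.toPath
    have hknot : k ∉ p.support :=
      leaf_not_mem_path hk hp (Finset.ne_of_mem_erase hv) (Finset.ne_of_mem_erase hw)
    have hsubset : ∀ e ∈ p.edges, e ∈ (G.deleteEdges {s(k, u)}).edgeSet := by
      intro e he
      rw [SimpleGraph.edgeSet_deleteEdges]
      refine ⟨p.edges_subset_edgeSet he, ?_⟩
      intro hmem
      rw [Set.mem_singleton_iff] at hmem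
      subst hmem
      exact hknot (p.fst_mem_support_of_mem_edges he)
    exact ⟨p.transfer _ hsubset⟩
  · intro v w hvw
    rw [SimpleGraph.deleteEdges_adj] at hvw
    refine Finset.mem_erase.mpr ⟨?_, hG.2.2 v w hvw.1⟩
    rintro rfl
    have hw : w ∈ {x | G.Adj v x} := hvw.1
    rw [hk, Set.mem_singleton_iff] at hw
    subst hw
    exact hvw.2 rfl

lemma realizes_deleteEdges (hd : ∀ v, {x | G.Adj v x}.ncard = d v)
    (hk : {x | G.Adj k x} = {u}) :
    ∀ v, {x | (G.deleteEdges {s(k, u)}).Adj v x}.ncard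
      = update (update d u (d u - 1)) k 0 v := by
  have hku : k ≠ u := G.ne_of_adj (adj_of_nb_eq hk)
  intro v
  by_cases hvk : v = k
  · subst hvk
    have : {x | (G.deleteEdges {s(v, u)}).Adj v x} = ∅ := by
      ext x
      simp only [SimpleGraph.deleteEdges_adj, Set.mem_setOf_eq, Set.mem_singleton_iff,
        Set.mem_empty_iff_false, iff_false, not_and, not_not]
      intro hx
      have : x ∈ {y | G.Adj v y} := hx
      rw [hk, Set.mem_singleton_iff] at this
      subst this
      rfl
    rw [this, Set.ncard_empty, update_self]
  · by_cases hvu : v = u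
    · subst hvu
      have hset : {x | (G.deleteEdges {s(k, v)}).Adj v x} = {x | G.Adj v x} \ {k} := by
        ext x
        simp only [SimpleGraph.deleteEdges_adj, Set.mem_setOf_eq, Set.mem_singleton_iff,
          Set.mem_diff, Sym2.eq_iff]
        constructor
        · rintro ⟨ha, hne⟩
          exact ⟨ha, fun hxk => hne (Or.inr ⟨trivial, hxk⟩)⟩
        · rintro ⟨ha, hxk⟩
          refine ⟨ha, ?_⟩
          rintro (⟨rfl, -⟩ | ⟨-, rfl⟩)
          · exact hku rfl
          · exact hxk rfl
      rw [hset, Set.ncard_diff_singleton_of_mem (by exact (adj_of_nb_eq hk).symm),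
        update_of_ne (Ne.symm hku), update_self, hd v]
    · have hset : {x | (G.deleteEdges {s(k, u)}).Adj v x} = {x | G.Adj v x} := by
        ext x
        simp only [SimpleGraph.deleteEdges_adj, Set.mem_setOf_eq, Set.mem_singleton_iff,
          Sym2.eq_iff]
        constructor
        · exact fun h => h.1
        · intro h
          refine ⟨h, ?_⟩
          rintro (⟨rfl, -⟩ | ⟨rfl, -⟩)
          · exact hvk rfl
          · exact hvu rfl
      rw [hset, update_of_ne hvk, update_of_ne hvu, hd v]


lemma sup_edge_adj (hku : k ≠ u) {v w : Fin n} :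
    (G' ⊔ fromEdgeSet {s(k, u)}).Adj v w ↔
      G'.Adj v w ∨ ((v = k ∧ w = u) ∨ (v = u ∧ w = k)) := by
  rw [SimpleGraph.sup_adj, SimpleGraph.fromEdgeSet_adj, Set.mem_singleton_iff, Sym2.eq_iff]
  constructor
  · rintro (h | ⟨h, -⟩)
    · exact Or.inl h
    · exact Or.inr h
  · rintro (h | h)
    · exact Or.inl h
    · refine Or.inr ⟨h, ?_⟩
      rintro rfl
      rcases h with ⟨rfl, rfl⟩ | ⟨rfl, rfl⟩ <;> exact hku rfl

lemma nb_sup_edge (hku : k ≠ u) (hiso : ∀ x, ¬ G'.Adj k x) :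
    {x | (G' ⊔ fromEdgeSet {s(k, u)}).Adj k x} = {u} := by
  ext x
  rw [Set.mem_setOf_eq, sup_edge_adj hku, Set.mem_singleton_iff]
  constructor
  · rintro (h | ⟨-, rfl⟩ | ⟨h, -⟩)
    · exact absurd h (hiso x)
    · rfl
    · exact absurd h hku
  · rintro rfl
    exact Or.inr (Or.inl ⟨rfl, rfl⟩)

lemma treeOn_sup_edge (hG' : TreeOn (s.erase k) G') (hks : k ∈ s) (hus : u ∈ s.erase k)
    (hiso : ∀ x, ¬ G'.Adj k x) :
    TreeOn s (G' ⊔ fromEdgeSet {s(k, u)}) := by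
  have hku : k ≠ u := fun h => Finset.ne_of_mem_erase hus h.symm
  set G : SimpleGraph (Fin n) := G' ⊔ fromEdgeSet {s(k, u)} with hGdef
  have hnb : {x | G.Adj k x} = {u} := nb_sup_edge hku hiso
  refine ⟨?_, ?_, ?_⟩
  · intro a c hc
    by_cases hkc : k ∈ c.support
    · exact no_cycle_at_leaf hnb.subset (c.rotate k hkc) (hc.rotate hkc)
    · have hsub : ∀ e ∈ c.edges, e ∈ G'.edgeSet := by
        intro e he
        have h1 : e ∈ G.edgeSet := c.edges_subset_edgeSet he
        rw [hGdef, SimpleGraph.edgeSet_sup, SimpleGraph.edgeSet_fromEdgeSet] at h1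
        rcases h1 with h1 | ⟨h1, -⟩
        · exact h1
        · rw [Set.mem_singleton_iff] at h1
          subst h1
          exact absurd (c.fst_mem_support_of_mem_edges he) hkc
      exact hG'.1 (c.transfer G' hsub) (hc.transfer hsub)
  · have hr : ∀ z ∈ s, G.Reachable z u := by
      intro z hz
      by_cases hzk : z = k
      · subst hzk
        have : G.Adj z u := by rw [sup_edge_adj hku]; exact Or.inr (Or.inl ⟨rfl, rfl⟩)
        exact this.reachable
      · exact (hG'.2.1 z (Finset.mem_erase.mpr ⟨hzk, hz⟩) u hus).mono le_sup_left
    exact fun v hv w hw => (hr v hv).trans (hr w hw).symm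
  · intro v w hvw
    rw [sup_edge_adj hku] at hvw
    rcases hvw with h | ⟨rfl, -⟩ | ⟨rfl, -⟩
    · exact Finset.mem_of_mem_erase (hG'.2.2 v w h)
    · exact hks
    · exact Finset.mem_of_mem_erase hus

lemma realizes_sup_edge (hd'' : ∀ v, {x | G'.Adj v x}.ncard = update (update d u (d u - 1)) k 0 v)
    (hdk : d k = 1) (hdu : 1 ≤ d u) (hku : k ≠ u) :
    ∀ v, {x | (G' ⊔ fromEdgeSet {s(k, u)}).Adj v x}.ncard = d v := by
  have hiso : ∀ x, ¬ G'.Adj k x := by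
    intro x hx
    have h0 : {x | G'.Adj k x}.ncard = 0 := by rw [hd'' k, update_self]
    rw [Set.ncard_eq_zero] at h0
    exact absurd (h0 ▸ hx) (Set.notMem_empty x)
  intro v
  by_cases hvk : v = k
  · subst hvk
    rw [nb_sup_edge hku hiso, Set.ncard_singleton, hdk]
  · by_cases hvu : v = u
    · subst hvu
      have hset : {x | (G' ⊔ fromEdgeSet {s(k, v)}).Adj v x} = insert k {x | G'.Adj v x} := by
        ext x
        rw [Set.mem_setOf_eq, sup_edge_adj hku, Set.mem_insert_iff]
        constructor
        · rintro (h | ⟨rfl, -⟩ | ⟨-, rfl⟩)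
          · exact Or.inr h
          · exact absurd rfl hvk
          · exact Or.inl rfl
        · rintro (rfl | h)
          · exact Or.inr (Or.inr ⟨rfl, rfl⟩)
          · exact Or.inl h
      have hknotmem : k ∉ {x | G'.Adj v x} := fun h => hiso v h.symm
      rw [hset, Set.ncard_insert_of_notMem hknotmem, hd'' v, update_of_ne hvk, update_self]
      omega
    · have hset : {x | (G' ⊔ fromEdgeSet {s(k, u)}).Adj v x} = {x | G'.Adj v x} := by
        ext x
        rw [Set.mem_setOf_eq, sup_edge_adj hku, Set.mem_setOf_eq]
        constructor
        · rintro (h | ⟨rfl, -⟩ | ⟨rfl, -⟩)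
          · exact h
          · exact absurd rfl hvk
          · exact absurd rfl hvu
        · exact Or.inl
      rw [hset, hd'' v, update_of_ne hvk, update_of_ne hvu]

lemma sup_delete_cancel (hiso : ∀ x, ¬ G'.Adj k x) (hku : k ≠ u) :
    (G' ⊔ fromEdgeSet {s(k, u)}).deleteEdges {s(k, u)} = G' := by
  ext v w
  rw [SimpleGraph.deleteEdges_adj, sup_edge_adj hku, Set.mem_singleton_iff, Sym2.eq_iff]
  constructor
  · rintro ⟨h | h, hne⟩
    · exact h
    · exact absurd h hne
  · intro h
    refine ⟨Or.inl h, ?_⟩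
    rintro (⟨rfl, rfl⟩ | ⟨rfl, rfl⟩)
    · exact hiso w h
    · exact hiso v h.symm

lemma delete_sup_cancel (hadj : G.Adj k u) :
    G.deleteEdges {s(k, u)} ⊔ fromEdgeSet {s(k, u)} = G := by
  have hku : k ≠ u := G.ne_of_adj hadj
  ext v w
  rw [sup_edge_adj hku, SimpleGraph.deleteEdges_adj, Set.mem_singleton_iff]
  constructor
  · rintro (⟨h, -⟩ | ⟨rfl, rfl⟩ | ⟨rfl, rfl⟩)
    · exact h
    · exact hadj
    · exact hadj.symm
  · intro h
    by_cases he : s(v, w) = s(k, u)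
    · rw [Sym2.eq_iff] at he
      exact Or.inr he
    · exact Or.inl ⟨h, he⟩


variable {s : Finset (Fin n)} {k u : Fin n} {d : Fin n → ℕ}

lemma ncard_biUnion {α ι : Type*} [Finite α] (t : Finset ι) (f : ι → Set α)
    (h : ∀ a ∈ t, ∀ b ∈ t, a ≠ b → Disjoint (f a) (f b)) :
    (⋃ i ∈ t, f i).ncard = ∑ i ∈ t, (f i).ncard := by
  classical
  induction t using Finset.induction_on with
  | empty => simp
  | @insert a t hat ih =>
    rw [Finset.set_biUnion_insert, Finset.sum_insert hat, Set.ncard_union_eq ?_,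
      ih (fun x hx y hy hxy => h x (Finset.mem_insert_of_mem hx) y (Finset.mem_insert_of_mem hy) hxy)]
    rw [Set.disjoint_left]
    intro x hx hmem
    rw [Set.mem_iUnion₂] at hmem
    obtain ⟨i, hi, hxi⟩ := hmem
    exact Set.disjoint_left.mp
      (h a (Finset.mem_insert_self a t) i (Finset.mem_insert_of_mem hi)
        (fun hai => hat (hai ▸ hi))) hx hxi

lemma nb_eq_of_realizes {G : SimpleGraph (Fin n)} (hd : realizes G d) (hdk : d k = 1)
    (hadj : G.Adj k u) : {x | G.Adj k x} = {u} := by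
  have h1 : {x | G.Adj k x}.ncard = 1 := by rw [hd k, hdk]
  obtain ⟨a, ha⟩ := Set.ncard_eq_one.mp h1
  have : u ∈ {x | G.Adj k x} := hadj
  rw [ha, Set.mem_singleton_iff] at this
  rw [ha, this]

lemma decomp (P : SimpleGraph (Fin n) → Prop) (hdk : d k = 1) :
    {G | TreeOn s G ∧ realizes G d ∧ P G}
      = ⋃ v ∈ s.erase k, {G | TreeOn s G ∧ realizes G d ∧ P G ∧ G.Adj k v} := by
  ext G
  simp only [Set.mem_setOf_eq, Set.mem_iUnion, exists_prop]
  constructor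
  · rintro ⟨h1, h2, h3⟩
    have h1' : {x | G.Adj k x}.ncard = 1 := by rw [h2 k, hdk]
    obtain ⟨a, ha⟩ := Set.ncard_eq_one.mp h1'
    have hadj : G.Adj k a := by
      have : a ∈ {x | G.Adj k x} := by rw [ha]; rfl
      exact this
    exact ⟨a, Finset.mem_erase.mpr ⟨(G.ne_of_adj hadj).symm, h1.2.2 a k hadj.symm⟩,
      h1, h2, h3, hadj⟩
  · rintro ⟨v, -, h1, h2, h3, -⟩
    exact ⟨h1, h2, h3⟩

lemma fibers_disjoint (P : SimpleGraph (Fin n) → Prop) (hdk : d k = 1) :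
    ∀ a ∈ s.erase k, ∀ b ∈ s.erase k, a ≠ b →
      Disjoint {G | TreeOn s G ∧ realizes G d ∧ P G ∧ G.Adj k a}
        {G | TreeOn s G ∧ realizes G d ∧ P G ∧ G.Adj k b} := by
  intro a _ b _ hab
  rw [Set.disjoint_left]
  rintro G ⟨-, h2, -, h4⟩ ⟨-, -, -, h4'⟩
  have ha := nb_eq_of_realizes h2 hdk h4
  have : b ∈ {x | G.Adj k x} := h4'
  rw [ha, Set.mem_singleton_iff] at this
  exact hab this.symm

lemma fiber_ncard (P : SimpleGraph (Fin n) → Prop)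
    (hPdel : ∀ G : SimpleGraph (Fin n), P G → P (G.deleteEdges {s(k, u)}))
    (hPsup : ∀ G' : SimpleGraph (Fin n), P G' → P (G' ⊔ fromEdgeSet {s(k, u)}))
    (hks : k ∈ s) (hus : u ∈ s.erase k) (hdk : d k = 1) (hdu : 1 ≤ d u) :
    {G | TreeOn s G ∧ realizes G d ∧ P G ∧ G.Adj k u}.ncard
      = {G' | TreeOn (s.erase k) G' ∧
          realizes G' (update (update d u (d u - 1)) k 0) ∧ P G'}.ncard := by
  have hku : k ≠ u := fun h => Finset.ne_of_mem_erase hus h.symm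
  set A := {G : SimpleGraph (Fin n) | TreeOn s G ∧ realizes G d ∧ P G ∧ G.Adj k u} with hA
  set B := {G' : SimpleGraph (Fin n) | TreeOn (s.erase k) G' ∧
      realizes G' (update (update d u (d u - 1)) k 0) ∧ P G'} with hB
  have hiso_of : ∀ G' ∈ B, ∀ x, ¬ G'.Adj k x := by
    rintro G' ⟨-, h2, -⟩ x hx
    have h0 : {y | G'.Adj k y}.ncard = 0 := by rw [h2 k, update_self]
    rw [Set.ncard_eq_zero] at h0
    exact absurd (h0 ▸ hx) (Set.notMem_empty x)
  have himg : (fun G => G.deleteEdges {s(k, u)}) '' A = B := by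
    apply Set.Subset.antisymm
    · rintro _ ⟨G, ⟨h1, h2, h3, h4⟩, rfl⟩
      have hnb := nb_eq_of_realizes h2 hdk h4
      exact ⟨treeOn_deleteEdges h1 hnb, realizes_deleteEdges h2 hnb, hPdel G h3⟩
    · intro G' hG'
      have hiso := hiso_of G' hG'
      obtain ⟨h1, h2, h3⟩ := hG'
      refine ⟨G' ⊔ fromEdgeSet {s(k, u)}, ⟨treeOn_sup_edge h1 hks hus hiso,
        realizes_sup_edge h2 hdk hdu hku, hPsup G' h3, ?_⟩, sup_delete_cancel hiso hku⟩
      rw [sup_edge_adj hku]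
      exact Or.inr (Or.inl ⟨rfl, rfl⟩)
  have hinj : Set.InjOn (fun G => G.deleteEdges {s(k, u)}) A := by
    rintro G₁ ⟨-, -, -, h4₁⟩ G₂ ⟨-, -, -, h4₂⟩ heq
    have e1 := delete_sup_cancel h4₁
    have e2 := delete_sup_cancel h4₂
    rw [← e1, ← e2]
    simp only at heq
    rw [heq]
  rw [← himg, Set.ncard_image_of_injOn hinj]

lemma empty_of_zero (P : SimpleGraph (Fin n) → Prop) (hcard : 2 ≤ s.card) {v : Fin n}
    (hv : v ∈ s) (hdv : d v = 0) :
    {G | TreeOn s G ∧ realizes G d ∧ P G} = ∅ := by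
  rw [Set.eq_empty_iff_forall_notMem]
  rintro G ⟨h1, h2, -⟩
  obtain ⟨w, hw, hwv⟩ := Finset.exists_mem_ne (s := s) (by omega) v
  obtain ⟨p⟩ := h1.2.1 v hv w hw
  obtain ⟨x, hx, -⟩ := exists_first_edge p hwv.symm
  have h0 : {y | G.Adj v y}.ncard = 0 := by rw [h2 v, hdv]
  rw [Set.ncard_eq_zero] at h0
  exact absurd (h0 ▸ hx) (Set.notMem_empty x)

lemma base_two (hcard : s.card = 2) (hd1 : ∀ v ∈ s, 1 ≤ d v) (hd0 : ∀ v ∉ s, d v = 0)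
    (hsum : ∑ v ∈ s, d v = 2) :
    {G | TreeOn s G ∧ realizes G d}.ncard = 1 := by
  obtain ⟨a, b, hab, rfl⟩ := Finset.card_eq_two.mp hcard
  have hsum' : d a + d b = 2 := by rwa [Finset.sum_pair hab] at hsum
  have hda : d a = 1 := by
    have h1 := hd1 a (Finset.mem_insert_self a {b})
    have h2 := hd1 b (Finset.mem_insert_of_mem (Finset.mem_singleton_self b))
    omega
  have hdb : d b = 1 := by omega
  have herase : ({a, b} : Finset (Fin n)).erase a = {b} := by
    rw [Finset.erase_insert (by simpa using hab)]
  rw [Set.ncard_eq_one]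
  refine ⟨⊥ ⊔ fromEdgeSet {s(a, b)}, ?_⟩
  have hbotTree : TreeOn (({a, b} : Finset (Fin n)).erase a) (⊥ : SimpleGraph (Fin n)) := by
    rw [herase]
    refine ⟨isAcyclic_bot, ?_, ?_⟩
    · intro v hv w hw
      rw [Finset.mem_singleton] at hv hw
      subst hv; subst hw
      exact Reachable.refl _
    · intro v w hvw
      exact absurd hvw (by simp)
  have hbotreal : ∀ v, {x | (⊥ : SimpleGraph (Fin n)).Adj v x}.ncard
      = update (update d b (d b - 1)) a 0 v := by
    intro v
    have : {x | (⊥ : SimpleGraph (Fin n)).Adj v x} = ∅ := by ext x; simp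
    rw [this, Set.ncard_empty]
    by_cases hva : v = a
    · rw [hva, update_self]
    · by_cases hvb : v = b
      · rw [hvb, update_of_ne (fun h => hab (h.symm)), update_self]; omega
      · rw [update_of_ne hva, update_of_ne hvb]
        exact (hd0 v (by simp [hva, hvb])).symm
  have hmemab : a ∈ ({a, b} : Finset (Fin n)) := Finset.mem_insert_self a {b}
  have hmembe : b ∈ ({a, b} : Finset (Fin n)).erase a := by
    rw [herase]; exact Finset.mem_singleton_self b
  have hG₀tree : TreeOn {a, b} (⊥ ⊔ fromEdgeSet {s(a, b)}) :=
    treeOn_sup_edge hbotTree hmemab hmembe (fun x => by simp)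
  have hG₀real : realizes (⊥ ⊔ fromEdgeSet {s(a, b)}) d :=
    realizes_sup_edge hbotreal hda (by omega) hab
  apply Set.eq_singleton_iff_unique_mem.mpr
  refine ⟨⟨hG₀tree, hG₀real⟩, ?_⟩
  rintro G ⟨h1, h2⟩
  have hadjab : G.Adj a b := by
    have h1' : {x | G.Adj a x}.ncard = 1 := by rw [h2 a, hda]
    obtain ⟨c, hc⟩ := Set.ncard_eq_one.mp h1'
    have hadj : G.Adj a c := by
      have : c ∈ {x | G.Adj a x} := by rw [hc]; rfl
      exact this
    have hcs : c ∈ ({a, b} : Finset (Fin n)) := h1.2.2 c a hadj.symm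
    have hca : c ≠ a := fun h => G.ne_of_adj hadj h.symm
    have hcb : c = b := by
      rcases Finset.mem_insert.mp hcs with h | h
      · exact absurd h hca
      · exact Finset.mem_singleton.mp h
    exact hcb ▸ hadj
  ext v w
  rw [sup_edge_adj hab, bot_adj]
  constructor
  · intro hvw
    have hvs := h1.2.2 v w hvw
    have hws := h1.2.2 w v hvw.symm
    simp only [Finset.mem_insert, Finset.mem_singleton] at hvs hws
    have hvwne := G.ne_of_adj hvw
    rcases hvs with rfl | rfl <;> rcases hws with rfl | rfl
    · exact absurd rfl hvwne
    · exact Or.inr (Or.inl ⟨rfl, rfl⟩)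
    · exact Or.inr (Or.inr ⟨rfl, rfl⟩)
    · exact absurd rfl hvwne
  · rintro (h | ⟨rfl, rfl⟩ | ⟨rfl, rfl⟩)
    · exact absurd h id
    · exact hadjab
    · exact hadjab.symm


lemma count_trees : ∀ m : ℕ, ∀ s : Finset (Fin n), s.card = m + 2 →
    ∀ d : Fin n → ℕ, (∀ v ∈ s, 1 ≤ d v) → (∀ v ∉ s, d v = 0) →
    (∑ v ∈ s, d v = 2 * (m + 2) - 2) →
    {G | TreeOn s G ∧ realizes G d}.ncard * ∏ v ∈ s, Nat.factorial (d v - 1)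
      = Nat.factorial m := by
  intro m
  induction m with
  | zero =>
    intro s hcard d hd1 hd0 hsum
    have hd1' : ∀ v ∈ s, d v = 1 := by
      intro v hv
      obtain ⟨a, b, hab, rfl⟩ := Finset.card_eq_two.mp hcard
      rw [Finset.sum_pair hab] at hsum
      have ha := hd1 a (Finset.mem_insert_self a {b})
      have hb := hd1 b (Finset.mem_insert_of_mem (Finset.mem_singleton_self b))
      rcases Finset.mem_insert.mp hv with rfl | hv'
      · omega
      · rw [Finset.mem_singleton] at hv'; subst hv'; omega
    have hprod : ∏ v ∈ s, Nat.factorial (d v - 1) = 1 := by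
      apply Finset.prod_eq_one
      intro v hv
      rw [hd1' v hv]
      rfl
    rw [hprod, base_two hcard hd1 hd0 (by omega), mul_one]
    rfl
  | succ m ih =>
    intro s hcard d hd1 hd0 hsum
    have hleaf : ∃ k ∈ s, d k = 1 := by
      by_contra hno
      push_neg at hno
      have h2 : ∀ v ∈ s, 2 ≤ d v := by
        intro v hv
        have := hd1 v hv
        have := hno v hv
        omega
      have hge : 2 * s.card ≤ ∑ v ∈ s, d v := by
        calc 2 * s.card = ∑ _v ∈ s, 2 := by rw [Finset.sum_const, smul_eq_mul, mul_comm]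
        _ ≤ _ := Finset.sum_le_sum h2
      omega
    obtain ⟨k, hks, hdk⟩ := hleaf
    have hXP : {G : SimpleGraph (Fin n) | TreeOn s G ∧ realizes G d}
        = {G | TreeOn s G ∧ realizes G d ∧ (fun _ => True) G} := by
      ext G; simp
    have hcard' : (s.erase k).card = m + 2 := by
      rw [Finset.card_erase_of_mem hks]; omega
    have hsumerase : ∑ v ∈ s.erase k, d v = 2 * m + 3 := by
      have := Finset.add_sum_erase s d hks
      omega
    rw [hXP, decomp (fun _ => True) hdk, ncard_biUnion _ _ (fibers_disjoint _ hdk),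
      Finset.sum_mul]
    have hterm : ∀ u ∈ s.erase k,
        {G | TreeOn s G ∧ realizes G d ∧ (fun _ => True) G ∧ G.Adj k u}.ncard
          * ∏ v ∈ s, Nat.factorial (d v - 1) = Nat.factorial m * (d u - 1) := by
      intro u hus
      have hdu1 : 1 ≤ d u := hd1 u (Finset.mem_of_mem_erase hus)
      have huk : u ≠ k := Finset.ne_of_mem_erase hus
      rw [fiber_ncard (fun _ => True) (fun _ _ => trivial) (fun _ _ => trivial) hks hus hdk hdu1]
      set d' : Fin n → ℕ := update (update d u (d u - 1)) k 0 with hd'def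
      have hYP : {G' : SimpleGraph (Fin n) | TreeOn (s.erase k) G' ∧ realizes G' d' ∧
          (fun _ => True) G'} = {G' | TreeOn (s.erase k) G' ∧ realizes G' d'} := by
        ext G; simp
      rw [hYP]
      have hd'u : d' u = d u - 1 := by rw [hd'def, update_of_ne huk, update_self]
      have hd'other : ∀ v, v ≠ k → v ≠ u → d' v = d v := by
        intro v h1 h2
        rw [hd'def, update_of_ne h1, update_of_ne h2]
      have hd'k : d' k = 0 := by rw [hd'def, update_self]
      have hprods : ∏ v ∈ s, Nat.factorial (d v - 1)
          = ∏ v ∈ s.erase k, Nat.factorial (d v - 1) := by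
        rw [← Finset.prod_erase_mul s _ hks, hdk]
        simp
      by_cases hdu2 : 2 ≤ d u
      · have hd1' : ∀ v ∈ s.erase k, 1 ≤ d' v := by
          intro v hv
          by_cases hvu : v = u
          · subst hvu; omega
          · rw [hd'other v (Finset.ne_of_mem_erase hv) hvu]
            exact hd1 v (Finset.mem_of_mem_erase hv)
        have hd0' : ∀ v ∉ s.erase k, d' v = 0 := by
          intro v hv
          by_cases hvk : v = k
          · subst hvk; exact hd'k
          · have hvs : v ∉ s := fun hmem => hv (Finset.mem_erase.mpr ⟨hvk, hmem⟩)
            rw [hd'other v hvk (fun h => hvs (h ▸ Finset.mem_of_mem_erase hus))]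
            exact hd0 v hvs
        have hsum' : ∑ v ∈ s.erase k, d' v = 2 * (m + 2) - 2 := by
          have husum := Finset.add_sum_erase (s.erase k) d hus
          have husum' := Finset.add_sum_erase (s.erase k) d' hus
          have hcongr : ∑ v ∈ (s.erase k).erase u, d' v = ∑ v ∈ (s.erase k).erase u, d v := by
            apply Finset.sum_congr rfl
            intro v hv
            exact hd'other v (Finset.ne_of_mem_erase (Finset.mem_of_mem_erase hv))
              (Finset.ne_of_mem_erase hv)
          omega
        have hih := ih (s.erase k) hcard' d' hd1' hd0' hsum'
        have hprod2 : ∏ v ∈ s.erase k, Nat.factorial (d v - 1)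
            = (∏ v ∈ s.erase k, Nat.factorial (d' v - 1)) * (d u - 1) := by
          rw [← Finset.prod_erase_mul (s.erase k) _ hus,
            ← Finset.prod_erase_mul (s.erase k) (fun v => Nat.factorial (d' v - 1)) hus]
          have hcongr : ∏ v ∈ (s.erase k).erase u, Nat.factorial (d' v - 1)
              = ∏ v ∈ (s.erase k).erase u, Nat.factorial (d v - 1) := by
            apply Finset.prod_congr rfl
            intro v hv
            rw [hd'other v (Finset.ne_of_mem_erase (Finset.mem_of_mem_erase hv))
              (Finset.ne_of_mem_erase hv)]
          rw [hcongr, hd'u]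
          have hfac : Nat.factorial (d u - 1) = Nat.factorial (d u - 1 - 1) * (d u - 1) := by
            obtain ⟨c, hc⟩ : ∃ c, d u - 1 = c + 1 := ⟨d u - 2, by omega⟩
            rw [hc]
            simp [Nat.factorial_succ, mul_comm]
          rw [hfac]
          ring
        rw [hprods, hprod2, ← mul_assoc, hih]
      · have hdu : d u = 1 := by omega
        have hempty : {G' : SimpleGraph (Fin n) | TreeOn (s.erase k) G' ∧ realizes G' d'} = ∅ := by
          have h := empty_of_zero (s := s.erase k) (d := d') (fun _ => True) (by omega)
            hus (by rw [hd'u]; omega)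
          rw [← h]
          ext G; simp
        rw [hempty, Set.ncard_empty, hdu]
        simp
    rw [Finset.sum_congr rfl hterm, ← Finset.mul_sum]
    have hsum2 : ∑ u ∈ s.erase k, (d u - 1) = m + 1 := by
      have h2 : ∑ u ∈ s.erase k, (d u - 1) + (s.erase k).card = ∑ u ∈ s.erase k, d u := by
        rw [Finset.card_eq_sum_ones, ← Finset.sum_add_distrib]
        apply Finset.sum_congr rfl
        intro v hv
        have := hd1 v (Finset.mem_of_mem_erase hv)
        omega
      omega
    rw [hsum2, Nat.factorial_succ]
    ring


lemma no_two_leaves {i j : Fin n} (hcard : 3 ≤ s.card) (hi : i ∈ s) (hij : i ≠ j)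
    (hdi : d i = 1) (hdj : d j = 1) :
    {G | TreeOn s G ∧ realizes G d ∧ G.Adj i j} = ∅ := by
  rw [Set.eq_empty_iff_forall_notMem]
  rintro G ⟨h1, h2, h3⟩
  have hnbi : {x | G.Adj i x} = {j} := nb_eq_of_realizes h2 hdi h3
  have hnbj : {x | G.Adj j x} = {i} := nb_eq_of_realizes h2 hdj h3.symm
  have hw : ∃ w ∈ s, w ≠ i ∧ w ≠ j := by
    have hj : j ∈ s := h1.2.2 j i h3.symm
    have hne : (((s.erase i).erase j)).Nonempty := by
      rw [← Finset.card_pos, Finset.card_erase_of_mem (Finset.mem_erase.mpr ⟨hij.symm, hj⟩),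
        Finset.card_erase_of_mem hi]
      omega
    obtain ⟨w, hw⟩ := hne
    exact ⟨w, Finset.mem_of_mem_erase (Finset.mem_of_mem_erase hw),
      Finset.ne_of_mem_erase (Finset.mem_of_mem_erase hw), Finset.ne_of_mem_erase hw⟩
  obtain ⟨w, hws, hwi, hwj⟩ := hw
  obtain ⟨p0⟩ := h1.2.1 i hi w hws
  obtain ⟨p, hp⟩ := p0.toPath
  clear p0
  cases p with
  | nil => exact hwi rfl
  | @cons _ x _ h t =>
    have hxj : x = j := by
      have hmem : x ∈ {y | G.Adj i y} := h
      rwa [hnbi, Set.mem_singleton_iff] at hmem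
    have hnbx : {z | G.Adj x z} = {i} := by rw [hxj]; exact hnbj
    cases t with
    | nil => exact hwj hxj
    | @cons _ y _ h' t' =>
      have hyi : y = i := by
        have hmem : y ∈ {z | G.Adj x z} := h'
        rwa [hnbx, Set.mem_singleton_iff] at hmem
      subst hyi
      rw [SimpleGraph.Walk.cons_isPath_iff] at hp
      exact hp.2 (by
        rw [SimpleGraph.Walk.support_cons]
        exact List.mem_cons_of_mem _ t'.start_mem_support)

lemma count_adj_leaf (m : ℕ) (hcard : s.card = m + 3) {i j : Fin n} (hij : i ≠ j)
    (hi : i ∈ s) (hj : j ∈ s) (hd1 : ∀ v ∈ s, 1 ≤ d v) (hd0 : ∀ v ∉ s, d v = 0)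
    (hsum : ∑ v ∈ s, d v = 2 * (m + 3) - 2) (hdi : d i = 1) :
    {G | TreeOn s G ∧ realizes G d ∧ G.Adj i j}.ncard * ∏ v ∈ s, Nat.factorial (d v - 1)
      = Nat.factorial m * ((d i - 1) + (d j - 1)) := by
  by_cases hdj : 2 ≤ d j
  · have hji : j ∈ s.erase i := Finset.mem_erase.mpr ⟨hij.symm, hj⟩
    have hXP : {G : SimpleGraph (Fin n) | TreeOn s G ∧ realizes G d ∧ G.Adj i j}
        = {G | TreeOn s G ∧ realizes G d ∧ (fun _ => True) G ∧ G.Adj i j} := by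
      ext G; simp
    rw [hXP, fiber_ncard (fun _ => True) (fun _ _ => trivial) (fun _ _ => trivial)
      hi hji hdi (by omega)]
    set d' : Fin n → ℕ := update (update d j (d j - 1)) i 0 with hd'def
    have hYP : {G' : SimpleGraph (Fin n) | TreeOn (s.erase i) G' ∧ realizes G' d' ∧
        (fun _ => True) G'} = {G' | TreeOn (s.erase i) G' ∧ realizes G' d'} := by
      ext G; simp
    rw [hYP]
    have hd'j : d' j = d j - 1 := by rw [hd'def, update_of_ne hij.symm, update_self]
    have hd'other : ∀ v, v ≠ i → v ≠ j → d' v = d v := by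
      intro v h1 h2
      rw [hd'def, update_of_ne h1, update_of_ne h2]
    have hcard' : (s.erase i).card = m + 2 := by rw [Finset.card_erase_of_mem hi]; omega
    have hd1' : ∀ v ∈ s.erase i, 1 ≤ d' v := by
      intro v hv
      by_cases hvj : v = j
      · subst hvj; omega
      · rw [hd'other v (Finset.ne_of_mem_erase hv) hvj]
        exact hd1 v (Finset.mem_of_mem_erase hv)
    have hd0' : ∀ v ∉ s.erase i, d' v = 0 := by
      intro v hv
      by_cases hvi : v = i
      · subst hvi; rw [hd'def, update_self]
      · have hvs : v ∉ s := fun hmem => hv (Finset.mem_erase.mpr ⟨hvi, hmem⟩)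
        rw [hd'other v hvi (fun h => hvs (h ▸ hj))]
        exact hd0 v hvs
    have hsum' : ∑ v ∈ s.erase i, d' v = 2 * (m + 2) - 2 := by
      have h0 := Finset.add_sum_erase s d hi
      have husum := Finset.add_sum_erase (s.erase i) d hji
      have husum' := Finset.add_sum_erase (s.erase i) d' hji
      have hcongr : ∑ v ∈ (s.erase i).erase j, d' v = ∑ v ∈ (s.erase i).erase j, d v := by
        apply Finset.sum_congr rfl
        intro v hv
        exact hd'other v (Finset.ne_of_mem_erase (Finset.mem_of_mem_erase hv))
          (Finset.ne_of_mem_erase hv)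
      omega
    have hih := count_trees m (s.erase i) hcard' d' hd1' hd0' hsum'
    have hprods : ∏ v ∈ s, Nat.factorial (d v - 1)
        = ∏ v ∈ s.erase i, Nat.factorial (d v - 1) := by
      rw [← Finset.prod_erase_mul s _ hi, hdi]
      simp
    have hprod2 : ∏ v ∈ s.erase i, Nat.factorial (d v - 1)
        = (∏ v ∈ s.erase i, Nat.factorial (d' v - 1)) * (d j - 1) := by
      rw [← Finset.prod_erase_mul (s.erase i) _ hji,
        ← Finset.prod_erase_mul (s.erase i) (fun v => Nat.factorial (d' v - 1)) hji]
      have hcongr : ∏ v ∈ ((s.erase i).erase j), Nat.factorial (d' v - 1)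
          = ∏ v ∈ ((s.erase i).erase j), Nat.factorial (d v - 1) := by
        apply Finset.prod_congr rfl
        intro v hv
        rw [hd'other v (Finset.ne_of_mem_erase (Finset.mem_of_mem_erase hv))
          (Finset.ne_of_mem_erase hv)]
      rw [hcongr, hd'j]
      have hfac : Nat.factorial (d j - 1) = Nat.factorial (d j - 1 - 1) * (d j - 1) := by
        obtain ⟨c, hc⟩ : ∃ c, d j - 1 = c + 1 := ⟨d j - 2, by omega⟩
        rw [hc]
        simp [Nat.factorial_succ, mul_comm]
      rw [hfac]
      ring
    rw [hprods, hprod2, ← mul_assoc, hih, hdi]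
    congr 1
    omega
  · have hdj1 : d j = 1 := by have := hd1 j hj; omega
    rw [no_two_leaves (by omega) hi hij hdi hdj1, Set.ncard_empty, hdi, hdj1]
    simp


lemma count_adj : ∀ m : ℕ, ∀ s : Finset (Fin n), s.card = m + 3 →
    ∀ d : Fin n → ℕ, ∀ i j : Fin n, i ≠ j → i ∈ s → j ∈ s →
    (∀ v ∈ s, 1 ≤ d v) → (∀ v ∉ s, d v = 0) →
    (∑ v ∈ s, d v = 2 * (m + 3) - 2) →
    {G | TreeOn s G ∧ realizes G d ∧ G.Adj i j}.ncard * ∏ v ∈ s, Nat.factorial (d v - 1)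
      = Nat.factorial m * ((d i - 1) + (d j - 1)) := by
  intro m
  induction m with
  | zero =>
    intro s hcard d i j hij hi hj hd1 hd0 hsum
    by_cases hdi : d i = 1
    · exact count_adj_leaf 0 hcard hij hi hj hd1 hd0 hsum hdi
    by_cases hdj : d j = 1
    · have hswap : {G : SimpleGraph (Fin n) | TreeOn s G ∧ realizes G d ∧ G.Adj i j}
          = {G | TreeOn s G ∧ realizes G d ∧ G.Adj j i} := by
        ext G
        exact ⟨fun ⟨a, b, c⟩ => ⟨a, b, c.symm⟩, fun ⟨a, b, c⟩ => ⟨a, b, c.symm⟩⟩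
      rw [hswap, count_adj_leaf 0 hcard hij.symm hj hi hd1 hd0 hsum hdj]
      exact congrArg _ (Nat.add_comm _ _)
    · exfalso
      have hjr : j ∈ s.erase i := Finset.mem_erase.mpr ⟨hij.symm, hj⟩
      have hne : (((s.erase i).erase j)).Nonempty := by
        rw [← Finset.card_pos, Finset.card_erase_of_mem hjr, Finset.card_erase_of_mem hi]
        omega
      obtain ⟨w, hw⟩ := hne
      have h1 := Finset.add_sum_erase s d hi
      have h2 := Finset.add_sum_erase (s.erase i) d hjr
      have h3 : d w ≤ ∑ v ∈ (s.erase i).erase j, d v :=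
        Finset.single_le_sum (fun a _ => Nat.zero_le (d a)) hw
      have hdw : 1 ≤ d w :=
        hd1 w (Finset.mem_of_mem_erase (Finset.mem_of_mem_erase hw))
      have hdi2 : 2 ≤ d i := by have := hd1 i hi; omega
      have hdj2 : 2 ≤ d j := by have := hd1 j hj; omega
      omega
  | succ m ih =>
    intro s hcard d i j hij hi hj hd1 hd0 hsum
    by_cases hdi : d i = 1
    · exact count_adj_leaf (m + 1) hcard hij hi hj hd1 hd0 hsum hdi
    by_cases hdj : d j = 1
    · have hswap : {G : SimpleGraph (Fin n) | TreeOn s G ∧ realizes G d ∧ G.Adj i j}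
          = {G | TreeOn s G ∧ realizes G d ∧ G.Adj j i} := by
        ext G
        exact ⟨fun ⟨a, b, c⟩ => ⟨a, b, c.symm⟩, fun ⟨a, b, c⟩ => ⟨a, b, c.symm⟩⟩
      rw [hswap, count_adj_leaf (m + 1) hcard hij.symm hj hi hd1 hd0 hsum hdj]
      exact congrArg _ (Nat.add_comm _ _)
    have hdi2 : 2 ≤ d i := by have := hd1 i hi; omega
    have hdj2 : 2 ≤ d j := by have := hd1 j hj; omega
    have hleaf : ∃ k ∈ s, k ≠ i ∧ k ≠ j ∧ d k = 1 := by
      by_contra hno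
      push_neg at hno
      have h2 : ∀ v ∈ s, 2 ≤ d v := by
        intro v hv
        by_cases hvi : v = i
        · subst hvi; exact hdi2
        by_cases hvj : v = j
        · subst hvj; exact hdj2
        have := hd1 v hv
        have := hno v hv hvi hvj
        omega
      have hge : 2 * s.card ≤ ∑ v ∈ s, d v := by
        calc 2 * s.card = ∑ _v ∈ s, 2 := by rw [Finset.sum_const, smul_eq_mul, mul_comm]
        _ ≤ _ := Finset.sum_le_sum h2
      omega
    obtain ⟨k, hks, hki, hkj, hdk⟩ := hleaf
    have hir : i ∈ s.erase k := Finset.mem_erase.mpr ⟨fun h => hki h.symm, hi⟩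
    have hjr : j ∈ s.erase k := Finset.mem_erase.mpr ⟨fun h => hkj h.symm, hj⟩
    have hcardr : (s.erase k).card = m + 3 := by
      rw [Finset.card_erase_of_mem hks]; omega
    have hsumr : ∑ v ∈ s.erase k, d v = 2 * m + 5 := by
      have := Finset.add_sum_erase s d hks
      omega
    set r := s.erase k with hrdef
    set g : Fin n → ℕ := fun u => (d u - 1) *
      ((update (update d u (d u - 1)) k 0 i - 1) + (update (update d u (d u - 1)) k 0 j - 1))
      with hg
    have hXP : {G : SimpleGraph (Fin n) | TreeOn s G ∧ realizes G d ∧ G.Adj i j}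
        = {G | TreeOn s G ∧ realizes G d ∧ (fun G => G.Adj i j) G} := by
      ext G; exact Iff.rfl
    rw [hXP, decomp (fun G => G.Adj i j) hdk,
      ncard_biUnion _ _ (fibers_disjoint _ hdk), Finset.sum_mul]
    have hterm : ∀ u ∈ r,
        {G | TreeOn s G ∧ realizes G d ∧ (fun G => G.Adj i j) G ∧ G.Adj k u}.ncard
          * ∏ v ∈ s, Nat.factorial (d v - 1) = Nat.factorial m * g u := by
      intro u hur
      have hdu1 : 1 ≤ d u := hd1 u (Finset.mem_of_mem_erase hur)
      have huk : u ≠ k := Finset.ne_of_mem_erase hur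
      have hPdel : ∀ G : SimpleGraph (Fin n), G.Adj i j →
          (G.deleteEdges {s(k, u)}).Adj i j := by
        intro G h
        rw [SimpleGraph.deleteEdges_adj]
        refine ⟨h, ?_⟩
        rw [Set.mem_singleton_iff, Sym2.eq_iff]
        rintro (⟨h1, -⟩ | ⟨-, h2⟩)
        · exact hki h1.symm
        · exact hkj h2.symm
      have hPsup : ∀ G' : SimpleGraph (Fin n), G'.Adj i j →
          (G' ⊔ fromEdgeSet {s(k, u)}).Adj i j := by
        intro G' h
        rw [SimpleGraph.sup_adj]
        exact Or.inl h
      rw [fiber_ncard (fun G => G.Adj i j) hPdel hPsup hks hur hdk hdu1]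
      set d' : Fin n → ℕ := update (update d u (d u - 1)) k 0 with hd'def
      have hYP : {G' : SimpleGraph (Fin n) | TreeOn r G' ∧ realizes G' d' ∧
          (fun G => G.Adj i j) G'} = {G' | TreeOn r G' ∧ realizes G' d' ∧ G'.Adj i j} := by
        ext G; exact Iff.rfl
      rw [hYP]
      have hd'u : d' u = d u - 1 := by rw [hd'def, update_of_ne huk, update_self]
      have hd'other : ∀ v, v ≠ k → v ≠ u → d' v = d v := by
        intro v h1 h2
        rw [hd'def, update_of_ne h1, update_of_ne h2]
      have hd'k : d' k = 0 := by rw [hd'def, update_self]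
      have hprods : ∏ v ∈ s, Nat.factorial (d v - 1)
          = ∏ v ∈ r, Nat.factorial (d v - 1) := by
        rw [hrdef, ← Finset.prod_erase_mul s _ hks, hdk]
        simp
      by_cases hdu2 : 2 ≤ d u
      · have hd1' : ∀ v ∈ r, 1 ≤ d' v := by
          intro v hv
          by_cases hvu : v = u
          · subst hvu; omega
          · rw [hd'other v (Finset.ne_of_mem_erase hv) hvu]
            exact hd1 v (Finset.mem_of_mem_erase hv)
        have hd0' : ∀ v ∉ r, d' v = 0 := by
          intro v hv
          by_cases hvk : v = k
          · subst hvk; exact hd'k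
          · have hvs : v ∉ s := fun hmem => hv (Finset.mem_erase.mpr ⟨hvk, hmem⟩)
            rw [hd'other v hvk (fun h => hvs (h ▸ Finset.mem_of_mem_erase hur))]
            exact hd0 v hvs
        have hsum' : ∑ v ∈ r, d' v = 2 * (m + 3) - 2 := by
          have husum := Finset.add_sum_erase r d hur
          have husum' := Finset.add_sum_erase r d' hur
          have hcongr : ∑ v ∈ r.erase u, d' v = ∑ v ∈ r.erase u, d v := by
            apply Finset.sum_congr rfl
            intro v hv
            exact hd'other v (Finset.ne_of_mem_erase (Finset.mem_of_mem_erase hv))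
              (Finset.ne_of_mem_erase hv)
          omega
        have hih := ih r hcardr d' i j hij hir hjr hd1' hd0' hsum'
        have hprod2 : ∏ v ∈ r, Nat.factorial (d v - 1)
            = (∏ v ∈ r, Nat.factorial (d' v - 1)) * (d u - 1) := by
          rw [← Finset.prod_erase_mul r _ hur,
            ← Finset.prod_erase_mul r (fun v => Nat.factorial (d' v - 1)) hur]
          have hcongr : ∏ v ∈ r.erase u, Nat.factorial (d' v - 1)
              = ∏ v ∈ r.erase u, Nat.factorial (d v - 1) := by
            apply Finset.prod_congr rfl
            intro v hv
            rw [hd'other v (Finset.ne_of_mem_erase (Finset.mem_of_mem_erase hv))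
              (Finset.ne_of_mem_erase hv)]
          rw [hcongr, hd'u]
          have hfac : Nat.factorial (d u - 1) = Nat.factorial (d u - 1 - 1) * (d u - 1) := by
            obtain ⟨c, hc⟩ : ∃ c, d u - 1 = c + 1 := ⟨d u - 2, by omega⟩
            rw [hc]
            simp [Nat.factorial_succ, mul_comm]
          rw [hfac]
          ring
        have hgu : g u = (d u - 1) * ((d' i - 1) + (d' j - 1)) := rfl
        rw [hprods, hprod2, ← mul_assoc, hih, hgu]
        ring
      · have hdu : d u = 1 := by omega
        have hempty : {G' : SimpleGraph (Fin n) | TreeOn r G' ∧ realizes G' d' ∧ G'.Adj i j}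
            = ∅ := by
          have h := empty_of_zero (s := r) (d := d') (fun G => G.Adj i j) (by omega) hur
            (by rw [hd'u, hdu])
          exact h
        have hgu : g u = 0 := by
          simp only [hg]
          rw [hdu]
          simp
        rw [hempty, Set.ncard_empty, hgu]
        simp
    rw [Finset.sum_congr rfl hterm, ← Finset.mul_sum]
    -- arithmetic part
    have hjri : j ∈ r.erase i := Finset.mem_erase.mpr ⟨hij.symm, hjr⟩
    set t := (r.erase i).erase j with htdef
    set R := ∑ u ∈ t, (d u - 1) with hRdef
    have hgi : g i = (d i - 1) * ((d i - 1 - 1) + (d j - 1)) := by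
      simp only [hg]
      have e1 : update (update d i (d i - 1)) k 0 i = d i - 1 := by
        rw [update_of_ne (fun h => hki h.symm), update_self]
      have e2 : update (update d i (d i - 1)) k 0 j = d j := by
        rw [update_of_ne (fun h => hkj h.symm), update_of_ne hij.symm]
      rw [e1, e2]
    have hgj : g j = (d j - 1) * ((d i - 1) + (d j - 1 - 1)) := by
      simp only [hg]
      have e1 : update (update d j (d j - 1)) k 0 i = d i := by
        rw [update_of_ne (fun h => hki h.symm), update_of_ne hij]
      have e2 : update (update d j (d j - 1)) k 0 j = d j - 1 := by
        rw [update_of_ne (fun h => hkj h.symm), update_self]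
      rw [e1, e2]
    have hrest : ∑ u ∈ t, g u = R * ((d i - 1) + (d j - 1)) := by
      rw [hRdef, Finset.sum_mul]
      apply Finset.sum_congr rfl
      intro u hu
      have hui : u ≠ i := Finset.ne_of_mem_erase (Finset.mem_of_mem_erase hu)
      have huj : u ≠ j := Finset.ne_of_mem_erase hu
      simp only [hg]
      have e1 : update (update d u (d u - 1)) k 0 i = d i := by
        rw [update_of_ne (fun h => hki h.symm), update_of_ne (fun h => hui h.symm)]
      have e2 : update (update d u (d u - 1)) k 0 j = d j := by
        rw [update_of_ne (fun h => hkj h.symm), update_of_ne (fun h => huj h.symm)]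
      rw [e1, e2]
    have hsplitg : ∑ u ∈ r, g u = g i + (g j + ∑ u ∈ t, g u) := by
      rw [htdef, Finset.add_sum_erase (r.erase i) g hjri, Finset.add_sum_erase r g hir]
    have hsplitd : ∑ u ∈ r, (d u - 1) = (d i - 1) + ((d j - 1) + R) := by
      rw [hRdef, htdef, Finset.add_sum_erase (r.erase i) (fun u => d u - 1) hjri,
        Finset.add_sum_erase r (fun u => d u - 1) hir]
    have hsumd1 : ∑ u ∈ r, (d u - 1) = m + 2 := by
      have h2 : ∑ u ∈ r, (d u - 1) + r.card = ∑ u ∈ r, d u := by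
        rw [Finset.card_eq_sum_ones, ← Finset.sum_add_distrib]
        apply Finset.sum_congr rfl
        intro v hv
        have := hd1 v (Finset.mem_of_mem_erase hv)
        omega
      omega
    obtain ⟨a', ha'⟩ : ∃ a', d i = a' + 2 := ⟨d i - 2, by omega⟩
    obtain ⟨b', hb'⟩ : ∃ b', d j = b' + 2 := ⟨d j - 2, by omega⟩
    have hm : m = a' + b' + R := by
      rw [hsplitd, ha', hb'] at hsumd1
      omega
    rw [hsplitg, hrest, hgi, hgj, ha', hb']
    have e1 : a' + 2 - 1 = a' + 1 := by omega
    have e2 : a' + 2 - 1 - 1 = a' := by omega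
    have e3 : b' + 2 - 1 = b' + 1 := by omega
    have e4 : b' + 2 - 1 - 1 = b' := by omega
    rw [e2, e4, e1, e3, Nat.factorial_succ, hm]
    ring


lemma treeOn_univ_iff [Nonempty (Fin n)] {G : SimpleGraph (Fin n)} :
    TreeOn Finset.univ G ↔ G.IsTree := by
  rw [SimpleGraph.isTree_iff]
  constructor
  · rintro ⟨h1, h2, -⟩
    exact ⟨(SimpleGraph.connected_iff G).mpr
      ⟨fun v w => h2 v (Finset.mem_univ v) w (Finset.mem_univ w), ‹_›⟩, h1⟩
  · rintro ⟨h1, h2⟩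
    exact ⟨h2, fun v _ w _ => h1.preconnected v w, fun v w _ => Finset.mem_univ v⟩


end TreeCount0

open TreeCount0 in
theorem prob_adjacent_in_random_tree (n : ℕ) (hn : 3 ≤ n) (d : Fin n → ℕ)
    (hd : isTreeSeq d) (i j : Fin n) (hij : i ≠ j) :
    ({T : SimpleGraph (Fin n) | T.IsTree ∧ realizes T d ∧ T.Adj i j}.ncard : ℚ) /
        ({T : SimpleGraph (Fin n) | T.IsTree ∧ realizes T d}.ncard : ℚ) =
      ((d i : ℚ) + (d j : ℚ) - 2) / ((n : ℚ) - 2) := by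
  have hne : Nonempty (Fin n) := ⟨i⟩
  have hset1 : {T : SimpleGraph (Fin n) | T.IsTree ∧ realizes T d}
      = {G | TreeOn Finset.univ G ∧ realizes G d} := by
    ext G
    simp only [Set.mem_setOf_eq, treeOn_univ_iff]
  have hset2 : {T : SimpleGraph (Fin n) | T.IsTree ∧ realizes T d ∧ T.Adj i j}
      = {G | TreeOn Finset.univ G ∧ realizes G d ∧ G.Adj i j} := by
    ext G
    simp only [Set.mem_setOf_eq, treeOn_univ_iff]
  set N := {G : SimpleGraph (Fin n) | TreeOn Finset.univ G ∧ realizes G d}.ncard with hN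
  set A := {G : SimpleGraph (Fin n) | TreeOn Finset.univ G ∧ realizes G d ∧ G.Adj i j}.ncard
    with hA
  set P := ∏ v : Fin n, Nat.factorial (d v - 1) with hP
  set m := n - 3 with hm
  have hcard3 : (Finset.univ : Finset (Fin n)).card = m + 3 := by
    rw [Finset.card_univ, Fintype.card_fin]; omega
  have hcard2 : (Finset.univ : Finset (Fin n)).card = (m + 1) + 2 := by
    rw [Finset.card_univ, Fintype.card_fin]; omega
  have hd1 : ∀ v ∈ (Finset.univ : Finset (Fin n)), 1 ≤ d v := fun v _ => hd.1 v
  have hd0 : ∀ v ∉ (Finset.univ : Finset (Fin n)), d v = 0 :=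
    fun v hv => absurd (Finset.mem_univ v) hv
  have hsum3 : ∑ v ∈ (Finset.univ : Finset (Fin n)), d v = 2 * (m + 3) - 2 := by
    have h3 : m + 3 = n := by omega
    rw [h3]
    exact hd.2
  have hsum2 : ∑ v ∈ (Finset.univ : Finset (Fin n)), d v = 2 * ((m + 1) + 2) - 2 := by
    have h3 : m + 1 + 2 = n := by omega
    rw [h3]
    exact hd.2
  have hNP : N * P = Nat.factorial (m + 1) :=
    count_trees (m + 1) Finset.univ hcard2 d hd1 hd0 hsum2
  have hAP : A * P = Nat.factorial m * ((d i - 1) + (d j - 1)) :=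
    count_adj m Finset.univ hcard3 d i j hij (Finset.mem_univ i) (Finset.mem_univ j)
      hd1 hd0 hsum3
  have hPpos : 0 < P := Finset.prod_pos (fun v _ => Nat.factorial_pos _)
  have hkey : A * (m + 1) = N * ((d i - 1) + (d j - 1)) := by
    have h1 : (A * (m + 1)) * P = (N * ((d i - 1) + (d j - 1))) * P := by
      calc (A * (m + 1)) * P = (A * P) * (m + 1) := by ring
      _ = Nat.factorial m * ((d i - 1) + (d j - 1)) * (m + 1) := by rw [hAP]
      _ = ((m + 1) * Nat.factorial m) * ((d i - 1) + (d j - 1)) := by ring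
      _ = Nat.factorial (m + 1) * ((d i - 1) + (d j - 1)) := by rw [Nat.factorial_succ]
      _ = (N * P) * ((d i - 1) + (d j - 1)) := by rw [hNP]
      _ = (N * ((d i - 1) + (d j - 1))) * P := by ring
    exact Nat.eq_of_mul_eq_mul_right hPpos h1
  have hN0 : N ≠ 0 := by
    intro h0
    have := hNP
    rw [h0, zero_mul] at this
    exact (Nat.factorial_pos (m + 1)).ne' this.symm
  rw [hset1, hset2, ← hN, ← hA]
  have hNq : (N : ℚ) ≠ 0 := Nat.cast_ne_zero.mpr hN0
  have hdenq : (n : ℚ) - 2 ≠ 0 := by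
    have h3 : (3 : ℚ) ≤ (n : ℚ) := by exact_mod_cast hn
    linarith
  rw [div_eq_div_iff hNq hdenq]
  have hcast : (A : ℚ) * ((m : ℚ) + 1) = (N : ℚ) * (((d i - 1 : ℕ) : ℚ) + ((d j - 1 : ℕ) : ℚ)) := by
    exact_mod_cast congrArg (fun x : ℕ => (x : ℚ)) hkey
  have hmq : (m : ℚ) + 1 = (n : ℚ) - 2 := by
    have : (m : ℚ) = ((n - 3 : ℕ) : ℚ) := by rw [hm]
    rw [this, Nat.cast_sub hn]
    ring
  have hdiq : ((d i - 1 : ℕ) : ℚ) = (d i : ℚ) - 1 := by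
    rw [Nat.cast_sub (hd.1 i)]
    norm_num
  have hdjq : ((d j - 1 : ℕ) : ℚ) = (d j : ℚ) - 1 := by
    rw [Nat.cast_sub (hd.1 j)]
    norm_num
  rw [hmq, hdiq, hdjq] at hcast
  linarith [hcast]
end
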